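/- arXiv:0904.4155 — 8 statements merged into one kernel-verified Lean document; each statement's English description precedes it below -/
import Mathlib

section
/- For every real number c ≥ α, the c-th moment of Ω is infinite: E[Ω^c] = ∑_{k=0}^∞ E[(∑_{k'=0}^k B_{k'})^c]·P[κ=k] = ∞, where α = -(log γ)/(log m). -/
open MeasureTheory Finset

theorem stmt0
    {S : Type*} [MeasurableSpace S] (μ : Measure S) [IsProbabilityMeasure μ]
    (m b0 γ : ℝ) (hm : 1 < m) (hb0 : 1 ≤ b0) (hγ0 : 0 < γ) (hγ : γ < 1 / m)
    (B : ℕ → S → ℝ) (κ : S → ℕ)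
    (hBmeas : ∀ k, Measurable (B k)) (hκmeas : Measurable κ)
    (hBunif : ∀ k, Measure.map (B k) μ
      = (ENNReal.ofReal (2 * b0 * m ^ k - 1))⁻¹ •
          (volume.restrict (Set.Icc (0:ℝ) (2 * b0 * m ^ k - 1))))
    (hBindep : ProbabilityTheory.iIndepFun B μ)
    (hκindep : ProbabilityTheory.IndepFun κ (fun x k => B k x) μ)
    (hκdist : ∀ k : ℕ, μ {x | κ x = k} = ENNReal.ofReal (γ ^ k - γ ^ (k + 1)))
    (α : ℝ) (hα : α = -(Real.log γ) / Real.log m)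
    (c : ℝ) (hc : α ≤ c) :
    ∫⁻ x, ENNReal.ofReal ((∑ k ∈ Finset.range (κ x + 1), B k x) ^ c) ∂μ = ⊤ := by
  have hm0 : (0:ℝ) < m := lt_trans one_pos hm
  have hγ1 : γ < 1 := lt_of_lt_of_le hγ (by rw [div_le_one hm0]; linarith)
  have hlogm : 0 < Real.log m := Real.log_pos hm
  have hlogγ : Real.log γ < 0 := Real.log_neg hγ0 hγ1
  have hα0 : 0 < α := by rw [hα]; exact div_pos (by linarith) hlogm
  have hc0 : 0 < c := lt_of_lt_of_le hα0 hc
  -- key: γ * m ^ c ≥ 1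
  have hmα : m ^ α = 1 / γ := by
    have hlm : Real.log m * α = -Real.log γ := by rw [hα]; field_simp
    rw [Real.rpow_def_of_pos hm0, hlm, Real.exp_neg, Real.exp_log hγ0, one_div]
  have hγm : 1 ≤ γ * m ^ c := by
    have : m ^ α ≤ m ^ c := Real.rpow_le_rpow_of_exponent_le hm.le hc
    rw [hmα] at this
    calc (1:ℝ) = γ * (1/γ) := by field_simp
    _ ≤ γ * m ^ c := by nlinarith
  -- the constant ε
  set ε : ℝ := (1 - γ) / (2 * 2 ^ c) with hε
  have h2c : (0:ℝ) < 2 ^ c := Real.rpow_pos_of_pos two_pos c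
  have hε0 : 0 < ε := by apply div_pos (by linarith) (by positivity)
  -- facts about L k := 2*b0*m^k - 1
  have hLlb : ∀ k : ℕ, m ^ k ≤ 2 * b0 * m ^ k - 1 := by
    intro k
    have h1 : (1:ℝ) ≤ m ^ k := one_le_pow₀ hm.le
    nlinarith
  have hL0 : ∀ k : ℕ, (0:ℝ) < 2 * b0 * m ^ k - 1 := by
    intro k
    have := hLlb k
    have : (0:ℝ) < m ^ k := pow_pos hm0 k
    linarith [hLlb k]
  -- a.e. nonnegativity of all B j
  have hBnn : ∀ᵐ x ∂μ, ∀ j, 0 ≤ B j x := by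
    rw [MeasureTheory.ae_all_iff]
    intro j
    rw [MeasureTheory.ae_iff]
    have : {x | ¬ 0 ≤ B j x} = B j ⁻¹' (Set.Iio 0) := by
      ext x; simp [not_le]
    rw [this, ← Measure.map_apply (hBmeas j) measurableSet_Iio, hBunif j]
    simp only [Measure.smul_apply, Measure.restrict_apply measurableSet_Iio]
    have : Set.Iio (0:ℝ) ∩ Set.Icc 0 (2 * b0 * m ^ j - 1) = ∅ := by
      ext y; simp only [Set.mem_inter_iff, Set.mem_Iio, Set.mem_Icc, Set.mem_empty_iff_false,
        iff_false, not_and]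
      intro hy h; exact absurd h (not_le.mpr hy)
    rw [this]; simp
  -- lower bound for each term
  have key : ∀ k : ℕ, ENNReal.ofReal ε ≤
      ∫⁻ x in {x | κ x = k}, ENNReal.ofReal ((∑ j ∈ Finset.range (κ x + 1), B j x) ^ c) ∂μ := by
    intro k
    set L : ℝ := 2 * b0 * m ^ k - 1 with hLdef
    have hLpos : 0 < L := hL0 k
    have hAk : MeasurableSet {x | κ x = k} := hκmeas (measurableSet_singleton k)
    -- step 1: on the set, the integrand dominates ofReal (B k x ^ c)
    have step1 : ∫⁻ x in {x | κ x = k}, ENNReal.ofReal ((B k x) ^ c) ∂μ ≤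
        ∫⁻ x in {x | κ x = k}, ENNReal.ofReal ((∑ j ∈ Finset.range (κ x + 1), B j x) ^ c) ∂μ := by
      apply lintegral_mono_ae
      rw [ae_restrict_iff' hAk]
      filter_upwards [hBnn] with x hx hxk
      apply ENNReal.ofReal_le_ofReal
      apply Real.rpow_le_rpow (hx k) _ hc0.le
      have hk : k ∈ Finset.range (κ x + 1) := by
        simp [Set.mem_setOf_eq.mp hxk]
      exact Finset.single_le_sum (fun j _ => hx j) hk
    -- step 2: independence splits the integral
    have hg : Measurable (fun x => ENNReal.ofReal ((B k x) ^ c)) :=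
      ((hBmeas k).pow_const c).ennreal_ofReal
    have hindep : ProbabilityTheory.IndepFun
        (fun x => Set.indicator {k} (fun _ => (1:ENNReal)) (κ x))
        (fun x => ENNReal.ofReal ((B k x) ^ c)) μ := by
      exact hκindep.comp (measurable_from_top
        (f := fun n : ℕ => Set.indicator {k} (fun _ => (1:ENNReal)) n))
        (((measurable_pi_apply k).pow_const c).ennreal_ofReal)
    have step2 : ∫⁻ x in {x | κ x = k}, ENNReal.ofReal ((B k x) ^ c) ∂μ =
        μ {x | κ x = k} * ∫⁻ x, ENNReal.ofReal ((B k x) ^ c) ∂μ := by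
      rw [← lintegral_indicator hAk]
      have : ∀ x, Set.indicator {x | κ x = k} (fun x => ENNReal.ofReal ((B k x) ^ c)) x
          = (Set.indicator {k} (fun _ => (1:ENNReal)) (κ x)) * ENNReal.ofReal ((B k x) ^ c) := by
        intro x
        by_cases h : κ x = k <;> simp [Set.indicator, h]
      simp_rw [this]
      have hf1 : Measurable fun x => Set.indicator {k} (fun _ => (1:ENNReal)) (κ x) := by
        exact (measurable_from_top
          (f := fun n : ℕ => Set.indicator {k} (fun _ => (1:ENNReal)) n)).comp hκmeas
      rw [ProbabilityTheory.lintegral_mul_eq_lintegral_mul_lintegral_of_indepFun''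
        hf1.aemeasurable hg.aemeasurable hindep]
      congr 1
      have : ∀ x, Set.indicator {k} (fun _ => (1:ENNReal)) (κ x)
          = Set.indicator {x | κ x = k} (fun _ => (1:ENNReal)) x := by
        intro x; by_cases h : κ x = k <;> simp [Set.indicator, h]
      simp_rw [this]
      rw [lintegral_indicator hAk]
      simp
    -- step 3: compute/lower-bound the moment of B k
    have step3 : ENNReal.ofReal ((L/2) ^ c * (L/2) / L) ≤
        ∫⁻ x, ENNReal.ofReal ((B k x) ^ c) ∂μ := by
      have hmap : ∫⁻ x, ENNReal.ofReal ((B k x) ^ c) ∂μ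
          = ∫⁻ y, ENNReal.ofReal (y ^ c) ∂(Measure.map (B k) μ) := by
        have hφ : Measurable fun y : ℝ => ENNReal.ofReal (y ^ c) :=
          (measurable_id.pow_const c).ennreal_ofReal
        rw [lintegral_map hφ (hBmeas k)]
      rw [hmap, hBunif k, lintegral_smul_measure]
      have hsub : Set.Icc (L/2) L ⊆ Set.Icc (0:ℝ) L := by
        apply Set.Icc_subset_Icc_left; linarith
      have hbound : ENNReal.ofReal ((L/2)^c) * ENNReal.ofReal (L/2) ≤
          ∫⁻ y in Set.Icc (0:ℝ) L, ENNReal.ofReal (y ^ c) := by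
        calc ENNReal.ofReal ((L/2)^c) * ENNReal.ofReal (L/2)
            = ∫⁻ _ in Set.Icc (L/2) L, ENNReal.ofReal ((L/2)^c) := by
              rw [setLIntegral_const, Real.volume_Icc]
              congr 1; ring_nf
          _ ≤ ∫⁻ y in Set.Icc (L/2) L, ENNReal.ofReal (y ^ c) := by
              apply lintegral_mono_ae
              rw [ae_restrict_iff' measurableSet_Icc]
              filter_upwards with y hy
              exact ENNReal.ofReal_le_ofReal
                (Real.rpow_le_rpow (by linarith [hLpos]) hy.1 hc0.le)
          _ ≤ ∫⁻ y in Set.Icc (0:ℝ) L, ENNReal.ofReal (y ^ c) :=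
              lintegral_mono_set hsub
      calc ENNReal.ofReal ((L/2) ^ c * (L/2) / L)
          = ENNReal.ofReal ((L/2) ^ c * (L/2)) / ENNReal.ofReal L := by
            rw [ENNReal.ofReal_div_of_pos hLpos]
        _ = (ENNReal.ofReal L)⁻¹ * (ENNReal.ofReal ((L/2)^c) * ENNReal.ofReal (L/2)) := by
            rw [ENNReal.div_eq_inv_mul, ENNReal.ofReal_mul (by positivity)]
        _ ≤ (ENNReal.ofReal L)⁻¹ * ∫⁻ y in Set.Icc (0:ℝ) L, ENNReal.ofReal (y ^ c) :=
            mul_le_mul_right hbound _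
    -- combine
    have hreal : ε ≤ (γ ^ k - γ ^ (k+1)) * ((L/2) ^ c * (L/2) / L) := by
      have h1 : γ ^ k - γ ^ (k+1) = γ ^ k * (1 - γ) := by ring
      have hLm : m ^ k / 2 ≤ L / 2 := by
        have := hLlb k; linarith
      have hmk2 : (0:ℝ) < m ^ k / 2 := by positivity
      have h2 : ((m:ℝ) ^ k / 2) ^ c ≤ (L/2) ^ c :=
        Real.rpow_le_rpow hmk2.le hLm hc0.le
      have h3 : ((m:ℝ) ^ k / 2) ^ c = (m ^ c) ^ k / 2 ^ c := by
        rw [Real.div_rpow (by positivity) (by norm_num), ← Real.rpow_natCast m k,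
          ← Real.rpow_natCast (m ^ c) k, ← Real.rpow_mul hm0.le, ← Real.rpow_mul hm0.le]
        ring_nf
      have h4 : (L/2) ^ c * (L/2) / L = (L/2) ^ c / 2 := by
        field_simp
      rw [h1, h4]
      have h5 : 1 ≤ γ ^ k * (m ^ c) ^ k := by
        rw [← mul_pow]
        exact one_le_pow₀ hγm
      have h6 : (m ^ c : ℝ) ^ k / 2 ^ c ≤ (L/2) ^ c := by rw [← h3]; exact h2
      have hγk : (0:ℝ) < γ ^ k := pow_pos hγ0 k
      calc ε = (1 - γ) / (2 * 2 ^ c) := hε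
        _ ≤ γ ^ k * (m ^ c) ^ k * (1 - γ) / (2 * 2 ^ c) := by
            gcongr
            nlinarith
        _ = γ ^ k * (1 - γ) * ((m ^ c) ^ k / 2 ^ c / 2) := by ring
        _ ≤ γ ^ k * (1 - γ) * ((L/2) ^ c / 2) := by
            have hγk0 : (0:ℝ) ≤ γ ^ k * (1 - γ) := mul_nonneg (pow_pos hγ0 k).le (by linarith)
            apply mul_le_mul_of_nonneg_left _ hγk0
            linarith [h6]
    calc ENNReal.ofReal ε
        ≤ ENNReal.ofReal ((γ ^ k - γ ^ (k+1)) * ((L/2) ^ c * (L/2) / L)) :=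
          ENNReal.ofReal_le_ofReal hreal
      _ = ENNReal.ofReal (γ ^ k - γ ^ (k+1)) * ENNReal.ofReal ((L/2) ^ c * (L/2) / L) := by
          rw [ENNReal.ofReal_mul (by
            have h7 : γ ^ (k+1) = γ ^ k * γ := pow_succ γ k
            nlinarith [pow_pos hγ0 k])]
      _ ≤ μ {x | κ x = k} * ∫⁻ x, ENNReal.ofReal ((B k x) ^ c) ∂μ := by
          rw [hκdist k]
          exact mul_le_mul_right step3 _
      _ = ∫⁻ x in {x | κ x = k}, ENNReal.ofReal ((B k x) ^ c) ∂μ := step2.symm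
      _ ≤ _ := step1
  -- partition the integral over the values of κ
  have hcover : (⋃ k : ℕ, {x | κ x = k}) = Set.univ := by
    ext x; simp
  have hdisj : Pairwise (Function.onFun Disjoint (fun k => {x | κ x = k})) := by
    intro i j hij
    simp only [Function.onFun, Set.disjoint_left]
    intro x hi hj
    exact hij (hi.symm.trans hj)
  have hparts : ∫⁻ x, ENNReal.ofReal ((∑ j ∈ Finset.range (κ x + 1), B j x) ^ c) ∂μ
      = ∑' k : ℕ, ∫⁻ x in {x | κ x = k},
          ENNReal.ofReal ((∑ j ∈ Finset.range (κ x + 1), B j x) ^ c) ∂μ := by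
    rw [← lintegral_iUnion (s := fun k => {x | κ x = k})
      (fun k => hκmeas (measurableSet_singleton k)) hdisj]
    rw [hcover, Measure.restrict_univ]
  rw [hparts]
  rw [eq_top_iff]
  calc (⊤:ENNReal) = ∑' _ : ℕ, ENNReal.ofReal ε :=
        (ENNReal.tsum_const_eq_top_of_ne_zero (by simp [hε0])).symm
    _ ≤ _ := ENNReal.tsum_le_tsum key
end

section
/- For every real c with 1 < c < α, the c-th moment of Ω is finite: E[Ω^c] < ∞. -/
open MeasureTheory Finset

theorem stmt1
    {S : Type*} [MeasurableSpace S] (μ : Measure S) [IsProbabilityMeasure μ]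
    (m b0 γ : ℝ) (hm : 1 < m) (hb0 : 1 ≤ b0) (hγ0 : 0 < γ) (hγ : γ < 1 / m)
    (B : ℕ → S → ℝ) (κ : S → ℕ)
    (hBmeas : ∀ k, Measurable (B k)) (hκmeas : Measurable κ)
    (hBunif : ∀ k, Measure.map (B k) μ
      = (ENNReal.ofReal (2 * b0 * m ^ k - 1))⁻¹ •
          (volume.restrict (Set.Icc (0:ℝ) (2 * b0 * m ^ k - 1))))
    (hBindep : ProbabilityTheory.iIndepFun B μ)
    (hκindep : ProbabilityTheory.IndepFun κ (fun x k => B k x) μ)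
    (hκdist : ∀ k : ℕ, μ {x | κ x = k} = ENNReal.ofReal (γ ^ k - γ ^ (k + 1)))
    (α : ℝ) (hα : α = -(Real.log γ) / Real.log m) (hα1 : 1 < α)
    (c : ℝ) (hc1 : 1 < c) (hc2 : c < α) :
    ∫⁻ x, ENNReal.ofReal ((∑ k ∈ Finset.range (κ x + 1), B k x) ^ c) ∂μ ≠ ⊤ := by
  have hc0 : (0:ℝ) < c := lt_trans one_pos hc1
  have hm0 : (0:ℝ) < m := lt_trans one_pos hm
  have hm1 : (0:ℝ) < m - 1 := by linarith
  have hb0' : (0:ℝ) < b0 := lt_of_lt_of_le one_pos hb0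
  set C : ℝ := 2 * b0 * m / (m - 1) with hCdef
  have hC0 : 0 < C := by positivity
  set r : ℝ := m ^ c * γ with hrdef
  have hr0 : 0 < r := mul_pos (Real.rpow_pos_of_pos hm0 c) hγ0
  have hlogm : 0 < Real.log m := Real.log_pos hm
  have hr1 : r < 1 := by
    have h1 : α * Real.log m = -Real.log γ := by
      rw [hα, div_mul_cancel₀ _ hlogm.ne']
    have hlogr : Real.log r < 0 := by
      rw [hrdef, Real.log_mul (by positivity) hγ0.ne', Real.log_rpow hm0]
      nlinarith
    exact (Real.log_neg_iff hr0).mp hlogr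
  -- a.e. x, all B k x are in the uniform range
  have hae : ∀ᵐ x ∂μ, ∀ k, B k x ∈ Set.Icc (0:ℝ) (2*b0*m^k-1) := by
    rw [ae_all_iff]
    intro k
    rw [ae_iff]
    have hset : MeasurableSet (Set.Icc (0:ℝ) (2*b0*m^k-1)) := measurableSet_Icc
    have heq : {x | ¬ B k x ∈ Set.Icc (0:ℝ) (2*b0*m^k-1)}
        = B k ⁻¹' (Set.Icc (0:ℝ) (2*b0*m^k-1))ᶜ := rfl
    rw [heq, ← Measure.map_apply (hBmeas k) hset.compl, hBunif k]
    simp [Measure.restrict_apply hset.compl, Set.compl_inter_self]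
  -- pointwise sum bound
  have hsum : ∀ (n : ℕ) (x : S), (∀ k, B k x ∈ Set.Icc (0:ℝ) (2*b0*m^k-1)) →
      ∑ k ∈ Finset.range (n+1), B k x ≤ C * m ^ n := by
    intro n x hx
    have h1 : ∑ k ∈ Finset.range (n+1), B k x ≤ ∑ k ∈ Finset.range (n+1), 2*b0*m^k := by
      refine Finset.sum_le_sum fun k _ => ?_
      have := (hx k).2
      linarith
    have h2 : ∑ k ∈ Finset.range (n+1), 2*b0*m^k = 2*b0*((m^(n+1)-1)/(m-1)) := by
      rw [← Finset.mul_sum, geom_sum_eq (ne_of_gt hm)]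
    have h3 : 2*b0*((m^(n+1)-1)/(m-1)) ≤ C * m^n := by
      rw [hCdef, div_mul_eq_mul_div, ← mul_div_assoc, div_le_div_iff₀ hm1 hm1, pow_succ]
      nlinarith [pow_pos hm0 n]
    linarith
  -- main estimate
  have step1 : ∫⁻ x, ENNReal.ofReal ((∑ k ∈ Finset.range (κ x + 1), B k x) ^ c) ∂μ
      ≤ ∫⁻ x, ENNReal.ofReal ((C * m ^ κ x) ^ c) ∂μ := by
    refine lintegral_mono_ae ?_
    filter_upwards [hae] with x hx
    exact ENNReal.ofReal_le_ofReal
      (Real.rpow_le_rpow (Finset.sum_nonneg fun k _ => (hx k).1) (hsum (κ x) x hx) hc0.le)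
  have hgmeas : Measurable (fun n : ℕ => ENNReal.ofReal ((C * m ^ n) ^ c)) :=
    measurable_from_top
  have step2 : ∫⁻ x, ENNReal.ofReal ((C * m ^ κ x) ^ c) ∂μ
      = ∑' n : ℕ, ENNReal.ofReal ((C * m ^ n) ^ c) * μ {x | κ x = n} := by
    rw [← lintegral_map hgmeas hκmeas, lintegral_countable']
    refine tsum_congr fun n => ?_
    rw [Measure.map_apply hκmeas (measurableSet_singleton n)]
    rfl
  have termbound : ∀ n : ℕ, ENNReal.ofReal ((C * m ^ n) ^ c) * μ {x | κ x = n}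
      ≤ ENNReal.ofReal (C ^ c) * (ENNReal.ofReal r) ^ n := by
    intro n
    rw [hκdist n]
    have h1 : (C * m ^ n) ^ c = C ^ c * (m ^ c) ^ n := by
      rw [Real.mul_rpow hC0.le (pow_nonneg hm0.le n),
        ← Real.rpow_natCast m n, ← Real.rpow_natCast (m ^ c) n,
        ← Real.rpow_mul hm0.le, ← Real.rpow_mul hm0.le, mul_comm (n:ℝ) c]
    have h2 : γ ^ n - γ ^ (n+1) ≤ γ ^ n := by
      have := pow_pos hγ0 (n+1); linarith
    have hmc : (0:ℝ) ≤ m ^ c := (Real.rpow_pos_of_pos hm0 c).le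
    have hCc : (0:ℝ) ≤ C ^ c := (Real.rpow_pos_of_pos hC0 c).le
    calc ENNReal.ofReal ((C * m ^ n) ^ c) * ENNReal.ofReal (γ ^ n - γ ^ (n+1))
        ≤ ENNReal.ofReal ((C * m ^ n) ^ c) * ENNReal.ofReal (γ ^ n) := by
          gcongr
      _ = ENNReal.ofReal (C ^ c) * (ENNReal.ofReal r) ^ n := by
          rw [h1, ← ENNReal.ofReal_pow hr0.le,
            ← ENNReal.ofReal_mul hCc, ← ENNReal.ofReal_mul (by positivity)]
          congr 1
          rw [hrdef, mul_pow]
          ring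
  have step3 : ∑' n : ℕ, ENNReal.ofReal ((C * m ^ n) ^ c) * μ {x | κ x = n}
      ≤ ENNReal.ofReal (C ^ c) * (1 - ENNReal.ofReal r)⁻¹ := by
    calc ∑' n : ℕ, ENNReal.ofReal ((C * m ^ n) ^ c) * μ {x | κ x = n}
        ≤ ∑' n : ℕ, ENNReal.ofReal (C ^ c) * (ENNReal.ofReal r) ^ n :=
          ENNReal.tsum_le_tsum termbound
      _ = ENNReal.ofReal (C ^ c) * ∑' n : ℕ, (ENNReal.ofReal r) ^ n :=
          ENNReal.tsum_mul_left
      _ = ENNReal.ofReal (C ^ c) * (1 - ENNReal.ofReal r)⁻¹ := by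
          rw [ENNReal.tsum_geometric]
  have hrlt1 : ENNReal.ofReal r < 1 := by
    rw [← ENNReal.ofReal_one]
    exact (ENNReal.ofReal_lt_ofReal_iff one_pos).mpr hr1
  have hne : ENNReal.ofReal (C ^ c) * (1 - ENNReal.ofReal r)⁻¹ ≠ ⊤ := by
    refine ENNReal.mul_ne_top ENNReal.ofReal_ne_top (ENNReal.inv_ne_top.mpr ?_)
    intro h
    exact absurd (tsub_eq_zero_iff_le.mp h) (not_le.mpr hrlt1)
  exact ne_top_of_le_ne_top hne (step1.trans (step2.le.trans step3))
end

section
/- Ω is wide-sense heavy-tailed: its moment generating function satisfies E[e^{tΩ}] = ∞ for all t > 0. -/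
open MeasureTheory Finset

theorem stmt2
    {S : Type*} [MeasurableSpace S] (μ : Measure S) [IsProbabilityMeasure μ]
    (m b0 γ : ℝ) (hm : 1 < m) (hb0 : 1 ≤ b0) (hγ0 : 0 < γ) (hγ : γ < 1 / m)
    (B : ℕ → S → ℝ) (κ : S → ℕ)
    (hBmeas : ∀ k, Measurable (B k)) (hκmeas : Measurable κ)
    (hBunif : ∀ k, Measure.map (B k) μ
      = (ENNReal.ofReal (2 * b0 * m ^ k - 1))⁻¹ •
          (volume.restrict (Set.Icc (0:ℝ) (2 * b0 * m ^ k - 1))))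
    (hBindep : ProbabilityTheory.iIndepFun B μ)
    (hκindep : ProbabilityTheory.IndepFun κ (fun x k => B k x) μ)
    (hκdist : ∀ k : ℕ, μ {x | κ x = k} = ENNReal.ofReal (γ ^ k * (1 - γ))) :
    ∀ t : ℝ, 0 < t →
      ∫⁻ x, ENNReal.ofReal (Real.exp (t * ∑ k ∈ Finset.range (κ x + 1), B k x)) ∂μ = ⊤ := by
  intro t ht
  by_contra hI
  set I := ∫⁻ x, ENNReal.ofReal (Real.exp (t * ∑ k ∈ Finset.range (κ x + 1), B k x)) ∂μ with hIdef
  have hγ1 : γ < 1 := lt_of_lt_of_le hγ (by rw [div_le_one (by linarith)]; linarith)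
  -- basic positivity
  have hmpos : (0:ℝ) < m := by linarith
  have hmk1 : ∀ k : ℕ, (1:ℝ) ≤ m ^ k := fun k => one_le_pow₀ hm.le
  have haL : ∀ k : ℕ, b0 * m ^ k ≤ 2 * b0 * m ^ k - 1 := by
    intro k
    have h1 : (1:ℝ) ≤ b0 * m ^ k := one_le_mul_of_one_le_of_one_le hb0 (hmk1 k)
    nlinarith
  have hapos : ∀ k : ℕ, (0:ℝ) < b0 * m ^ k := by
    intro k; have := hmk1 k; nlinarith
  have hLpos : ∀ k : ℕ, (0:ℝ) < 2 * b0 * m ^ k - 1 := fun k =>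
    lt_of_lt_of_le (hapos k) (haL k)
  -- a.e. nonnegativity of each B j
  have hB0 : ∀ j : ℕ, ∀ᵐ x ∂μ, 0 ≤ B j x := by
    intro j
    have hmap : μ (B j ⁻¹' Set.Iio 0) = 0 := by
      rw [← Measure.map_apply (hBmeas j) measurableSet_Iio, hBunif j,
        Measure.smul_apply, Measure.restrict_apply measurableSet_Iio]
      have : Set.Iio (0:ℝ) ∩ Set.Icc 0 (2 * b0 * m ^ j - 1) = ∅ := by
        ext x
        constructor
        · rintro ⟨h1, h2, _⟩; exact absurd h2 (not_le.2 h1)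
        · exact fun h => h.elim
      rw [this]; simp
    have : {x | ¬ 0 ≤ B j x} ⊆ B j ⁻¹' Set.Iio 0 := by
      intro x hx; simpa using lt_of_not_ge hx
    exact ae_iff.2 (measure_mono_null this hmap)
  -- measurable events
  have hEmeas : ∀ k : ℕ, MeasurableSet ({x | κ x = k} ∩ {x | b0 * m ^ k ≤ B k x}) := by
    intro k
    exact (hκmeas (measurableSet_singleton k)).inter
      (measurableSet_le measurable_const (hBmeas k))
  -- measure of the tail event for B k
  have hBtail : ∀ k : ℕ, μ {x | b0 * m ^ k ≤ B k x}
      = (ENNReal.ofReal (2 * b0 * m ^ k - 1))⁻¹ * ENNReal.ofReal (b0 * m ^ k - 1) := by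
    intro k
    have : {x | b0 * m ^ k ≤ B k x} = B k ⁻¹' Set.Ici (b0 * m ^ k) := rfl
    rw [this, ← Measure.map_apply (hBmeas k) measurableSet_Ici, hBunif k,
      Measure.smul_apply, Measure.restrict_apply measurableSet_Ici, smul_eq_mul]
    congr 1
    have hset : Set.Ici (b0 * m ^ k) ∩ Set.Icc (0:ℝ) (2 * b0 * m ^ k - 1)
        = Set.Icc (b0 * m ^ k) (2 * b0 * m ^ k - 1) := by
      ext x
      simp only [Set.mem_inter_iff, Set.mem_Ici, Set.mem_Icc]
      constructor
      · rintro ⟨h1, _, h2⟩; exact ⟨h1, h2⟩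
      · rintro ⟨h1, h2⟩; exact ⟨h1, (hapos k).le.trans h1, h2⟩
    rw [hset, Real.volume_Icc]
    ring_nf
  -- measure of the combined event
  have hEμ : ∀ k : ℕ, μ ({x | κ x = k} ∩ {x | b0 * m ^ k ≤ B k x})
      = ENNReal.ofReal (γ ^ k * (1 - γ)) *
        ((ENNReal.ofReal (2 * b0 * m ^ k - 1))⁻¹ * ENNReal.ofReal (b0 * m ^ k - 1)) := by
    intro k
    have h1 : {x | κ x = k} = κ ⁻¹' {k} := rfl
    have h2 : {x | b0 * m ^ k ≤ B k x}
        = (fun x (j : ℕ) => B j x) ⁻¹' {f : ℕ → ℝ | b0 * m ^ k ≤ f k} := rfl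
    rw [← hκdist k, ← hBtail k, h1, h2]
    exact hκindep.measure_inter_preimage_eq_mul _ _ (measurableSet_singleton k)
      (measurableSet_le measurable_const (measurable_pi_apply k))
  -- pointwise-a.e. lower bound on the set, then integral lower bound
  have key : ∀ k : ℕ,
      ENNReal.ofReal (Real.exp (t * (b0 * m ^ k))) *
        μ ({x | κ x = k} ∩ {x | b0 * m ^ k ≤ B k x}) ≤ I := by
    intro k
    set E := {x | κ x = k} ∩ {x | b0 * m ^ k ≤ B k x} with hE
    have hae : ∀ᵐ x ∂μ, x ∈ E →
        ENNReal.ofReal (Real.exp (t * (b0 * m ^ k)))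
          ≤ ENNReal.ofReal (Real.exp (t * ∑ j ∈ Finset.range (κ x + 1), B j x)) := by
      have hall : ∀ᵐ x ∂μ, ∀ j : ℕ, 0 ≤ B j x := (ae_all_iff).2 hB0
      filter_upwards [hall] with x hx hxE
      have hκx : κ x = k := hxE.1
      have hsum : b0 * m ^ k ≤ ∑ j ∈ Finset.range (κ x + 1), B j x := by
        rw [hκx]
        refine le_trans hxE.2 ?_
        exact Finset.single_le_sum (fun j _ => hx j) (Finset.self_mem_range_succ k)
      exact ENNReal.ofReal_le_ofReal (Real.exp_le_exp.2
        (mul_le_mul_of_nonneg_left hsum ht.le))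
    calc ENNReal.ofReal (Real.exp (t * (b0 * m ^ k))) * μ E
        = ∫⁻ _ in E, ENNReal.ofReal (Real.exp (t * (b0 * m ^ k))) ∂μ :=
          (setLIntegral_const E _).symm
      _ ≤ ∫⁻ x in E, ENNReal.ofReal
            (Real.exp (t * ∑ j ∈ Finset.range (κ x + 1), B j x)) ∂μ :=
          setLIntegral_mono_ae' (hEmeas k) hae
      _ ≤ I := setLIntegral_le_lintegral _ _
  -- real-valued lower bounds on I.toReal
  set r : ℕ → ℝ := fun k => Real.exp (t * (b0 * m ^ k)) *
      ((γ ^ k * (1 - γ)) * ((2 * b0 * m ^ k - 1)⁻¹ * (b0 * m ^ k - 1))) with hr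
  have hγk : ∀ k : ℕ, 0 ≤ γ ^ k * (1 - γ) := fun k =>
    mul_nonneg (pow_nonneg hγ0.le k) (by linarith)
  have hIk : ∀ k : ℕ, r k ≤ I.toReal := by
    intro k
    have hofReal : ENNReal.ofReal (r k)
        = ENNReal.ofReal (Real.exp (t * (b0 * m ^ k))) *
          (ENNReal.ofReal (γ ^ k * (1 - γ)) *
            ((ENNReal.ofReal (2 * b0 * m ^ k - 1))⁻¹ * ENNReal.ofReal (b0 * m ^ k - 1))) := by
      rw [hr, ENNReal.ofReal_mul (Real.exp_nonneg _), ENNReal.ofReal_mul (hγk k),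
        ENNReal.ofReal_mul (inv_nonneg.2 (hLpos k).le), ENNReal.ofReal_inv_of_pos (hLpos k)]
    have hle : ENNReal.ofReal (r k) ≤ I := by
      rw [hofReal, ← hEμ k]
      exact key k
    exact (ENNReal.ofReal_le_iff_le_toReal hI).1 hle
  -- choose n with m ^ n * γ > 1
  obtain ⟨n, hn⟩ := pow_unbounded_of_one_lt (1 / γ) hm
  have hρ : 1 < m ^ n * γ := by
    rw [div_lt_iff₀ hγ0] at hn; linarith
  set c := t * b0 with hc
  have hcpos : 0 < c := mul_pos ht (by linarith)
  set Cq := c ^ n / (n.factorial : ℝ) * ((1 - γ) * (1 / 4)) with hCq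
  have hCqpos : 0 < Cq := by
    apply mul_pos
    · exact div_pos (pow_pos hcpos n) (by exact_mod_cast Nat.factorial_pos n)
    · apply mul_pos <;> linarith
  have htend : Filter.Tendsto (fun k : ℕ => Cq * (m ^ n * γ) ^ k) Filter.atTop Filter.atTop :=
    Filter.Tendsto.const_mul_atTop hCqpos (tendsto_pow_atTop_atTop_of_one_lt hρ)
  have h2 : Filter.Tendsto (fun k : ℕ => m ^ k) Filter.atTop Filter.atTop :=
    tendsto_pow_atTop_atTop_of_one_lt hm
  obtain ⟨k, hk1, hk2⟩ :=
    ((htend.eventually_gt_atTop I.toReal).and (h2.eventually_ge_atTop 2)).exists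
  -- show Cq * ρ^k ≤ r k
  have hx0 : (0:ℝ) ≤ c * m ^ k := (mul_pos hcpos (pow_pos hmpos k)).le
  have hexp : (c * m ^ k) ^ n / (n.factorial : ℝ) ≤ Real.exp (c * m ^ k) := by
    have hsum := Real.sum_le_exp_of_nonneg hx0 (n + 1)
    have hterm : (c * m ^ k) ^ n / (n.factorial : ℝ)
        ≤ ∑ i ∈ Finset.range (n + 1), (c * m ^ k) ^ i / (i.factorial : ℝ) :=
      Finset.single_le_sum (f := fun i => (c * m ^ k) ^ i / (i.factorial : ℝ))
        (fun i _ => div_nonneg (pow_nonneg hx0 i) (Nat.cast_nonneg _))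
        (Finset.self_mem_range_succ n)
    linarith
  have hquarter : (1:ℝ) / 4 ≤ (2 * b0 * m ^ k - 1)⁻¹ * (b0 * m ^ k - 1) := by
    rw [inv_mul_eq_div, le_div_iff₀ (hLpos k)]
    nlinarith [mul_le_mul_of_nonneg_right hb0 (pow_pos hmpos k).le]
  have hid : Cq * (m ^ n * γ) ^ k
      = (c * m ^ k) ^ n / (n.factorial : ℝ) * ((γ ^ k * (1 - γ)) * (1 / 4)) := by
    have h1 : ((m ^ n * γ : ℝ)) ^ k = (m ^ k) ^ n * γ ^ k := by
      rw [mul_pow, ← pow_mul, ← pow_mul, Nat.mul_comm]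
    have h2 : ((c * m ^ k : ℝ)) ^ n = c ^ n * (m ^ k) ^ n := mul_pow _ _ _
    rw [hCq, h1, h2]; ring
  have hqr : Cq * (m ^ n * γ) ^ k ≤ r k := by
    rw [hid]
    simp only [hr]
    have harg : t * (b0 * m ^ k) = c * m ^ k := by rw [hc]; ring
    rw [harg]
    exact mul_le_mul hexp (mul_le_mul_of_nonneg_left hquarter (hγk k))
      (mul_nonneg (hγk k) (by norm_num)) (Real.exp_nonneg _)
  exact absurd (le_trans hqr (hIk k)) (not_le.2 hk1)
end

section
/- The second moment of Ω satisfies E[Ω²] = ∑_{k=0}^K γ^k (1+v_k²)/q_k² + 2 ∑_{k=1}^K (γ^k/q_k) ∑_{i=0}^{k-1} (1/q_i). -/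
open MeasureTheory Finset
open scoped ENNReal

private lemma aux_sum (γ : ℝ) (K : ℕ) (c : ℕ → ℝ) :
    ∑ j ∈ range (K+1), (if j = K then γ^K else γ^j - γ^(j+1)) * ∑ k ∈ range (j+1), c k
      = ∑ k ∈ range (K+1), γ^k * c k := by
  induction K generalizing c with
  | zero => simp
  | succ K ih =>
    have h1 : ∀ j ∈ range (K+1),
        (if j = K+1 then γ^(K+1) else γ^j - γ^(j+1)) * ∑ k ∈ range (j+1), c k
        = (γ^j - γ^(j+1)) * ∑ k ∈ range (j+1), c k := by
      intro j hj
      rw [if_neg (by simp only [mem_range] at hj; omega)]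
    have h2 : ∀ j ∈ range K,
        (γ^j - γ^(j+1)) * ∑ k ∈ range (j+1), c k
        = (if j = K then γ^K else γ^j - γ^(j+1)) * ∑ k ∈ range (j+1), c k := by
      intro j hj
      rw [if_neg (by simp only [mem_range] at hj; omega)]
    rw [sum_range_succ, sum_congr rfl h1, sum_range_succ, sum_congr rfl h2,
      sum_range_succ (fun k => γ^k * c k), ← ih c]
    rw [sum_range_succ (fun j => (if j = K then γ^K else γ^j - γ^(j+1)) * ∑ k ∈ range (j+1), c k),
      if_pos rfl, sum_range_succ c (K+1), sum_range_succ c K]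
    simp only [if_true]
    ring

theorem stmt4
    {S : Type*} [MeasurableSpace S] (μ : Measure S) [IsProbabilityMeasure μ]
    (K : ℕ) (γ : ℝ) (hγ0 : 0 ≤ γ) (hγ1 : γ < 1)
    (B : ℕ → S → ℝ) (κ : S → ℕ) (q v : ℕ → ℝ) (hq : ∀ k, 0 < q k)
    (hBmeas : ∀ k, Measurable (B k)) (hκmeas : Measurable κ)
    (hBpos : ∀ k x, 0 ≤ B k x)
    (hBmean : ∀ k, k ≤ K → ∫⁻ x, ENNReal.ofReal (B k x) ∂μ = ENNReal.ofReal (1 / q k))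
    (hB2 : ∀ k, k ≤ K →
      ∫⁻ x, ENNReal.ofReal ((B k x) ^ 2) ∂μ = ENNReal.ofReal ((1 + (v k) ^ 2) / (q k) ^ 2))
    (hκle : ∀ x, κ x ≤ K)
    (hκdist : ∀ k, k < K → μ {x | κ x = k} = ENNReal.ofReal (γ ^ k - γ ^ (k + 1)))
    (hκK : μ {x | κ x = K} = ENNReal.ofReal (γ ^ K))
    (hBindep : ProbabilityTheory.iIndepFun B μ)
    (hκindep : ProbabilityTheory.IndepFun κ (fun x k => B k x) μ) :
    ∫⁻ x, ENNReal.ofReal ((∑ k ∈ Finset.range (κ x + 1), B k x) ^ 2) ∂μ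
      = ENNReal.ofReal
          ((∑ k ∈ Finset.range (K + 1), γ ^ k * (1 + (v k) ^ 2) / (q k) ^ 2)
            + 2 * ∑ k ∈ Finset.Icc 1 K, (γ ^ k / q k) * ∑ i ∈ Finset.range k, 1 / q i) := by
  classical
  set c : ℕ → ℝ := fun k => (1 + (v k)^2) / (q k)^2 + 2 * (1 / q k) * ∑ i ∈ range k, 1 / q i
    with hc
  have hqinv : ∀ k, (0:ℝ) ≤ 1 / q k := fun k => one_div_nonneg.mpr (hq k).le
  have hTnn : ∀ j, (0:ℝ) ≤ ∑ i ∈ range j, 1 / q i :=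
    fun j => Finset.sum_nonneg fun i _ => hqinv i
  have hvq : ∀ k, (0:ℝ) ≤ (1 + (v k)^2) / (q k)^2 :=
    fun k => div_nonneg (by positivity) (by positivity)
  have hcnn : ∀ k, 0 ≤ c k := fun k =>
    add_nonneg (hvq k) (mul_nonneg (mul_nonneg (by norm_num) (hqinv k)) (hTnn k))
  -- mean of partial sums
  have hSnn : ∀ j x, (0:ℝ) ≤ ∑ k ∈ range (j+1), B k x :=
    fun j x => Finset.sum_nonneg fun k _ => hBpos k x
  have hSmeas : ∀ j, Measurable fun x => ∑ k ∈ range (j+1), B k x :=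
    fun j => Finset.measurable_sum _ fun k _ => hBmeas k
  have hmean : ∀ j, j ≤ K →
      ∫⁻ x, ENNReal.ofReal (∑ k ∈ range (j+1), B k x) ∂μ
        = ENNReal.ofReal (∑ k ∈ range (j+1), 1 / q k) := by
    intro j hj
    have h1 : ∀ x, ENNReal.ofReal (∑ k ∈ range (j+1), B k x)
        = ∑ k ∈ range (j+1), ENNReal.ofReal (B k x) := by
      intro x
      exact ENNReal.ofReal_sum_of_nonneg fun k _ => hBpos k x
    rw [lintegral_congr h1,
      lintegral_finset_sum _ fun k _ => (hBmeas k).ennreal_ofReal]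
    rw [Finset.sum_congr rfl fun k hk => hBmean k (by simp only [mem_range] at hk; omega)]
    exact (ENNReal.ofReal_sum_of_nonneg fun k _ => hqinv k).symm
  -- second moment of partial sums
  have hmom : ∀ j, j ≤ K →
      ∫⁻ x, ENNReal.ofReal ((∑ k ∈ range (j+1), B k x)^2) ∂μ
        = ENNReal.ofReal (∑ k ∈ range (j+1), c k) := by
    intro j
    induction j with
    | zero =>
      intro _
      simp only [zero_add, range_one, sum_singleton]
      rw [hB2 0 (Nat.zero_le K)]
      congr 1
      simp [hc]
    | succ j ih =>
      intro hj
      have hj' : j ≤ K := Nat.le_of_succ_le hj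
      have hpt : ∀ x, ENNReal.ofReal ((∑ k ∈ range (j+1+1), B k x)^2)
          = ENNReal.ofReal ((∑ k ∈ range (j+1), B k x)^2)
            + (2 * (ENNReal.ofReal (∑ k ∈ range (j+1), B k x)
                * ENNReal.ofReal (B (j+1) x))
              + ENNReal.ofReal ((B (j+1) x)^2)) := by
        intro x
        rw [sum_range_succ]
        have hring : (∑ k ∈ range (j+1), B k x + B (j+1) x)^2
            = (∑ k ∈ range (j+1), B k x)^2
              + (2 * ((∑ k ∈ range (j+1), B k x) * B (j+1) x) + (B (j+1) x)^2) := by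
          ring
        rw [hring, ENNReal.ofReal_add (sq_nonneg _)
            (add_nonneg (mul_nonneg (by norm_num)
              (mul_nonneg (hSnn j x) (hBpos (j+1) x))) (sq_nonneg _)),
          ENNReal.ofReal_add (mul_nonneg (by norm_num)
              (mul_nonneg (hSnn j x) (hBpos (j+1) x))) (sq_nonneg _),
          ENNReal.ofReal_mul (by norm_num : (0:ℝ) ≤ 2),
          ENNReal.ofReal_mul (hSnn j x), ENNReal.ofReal_ofNat]
      rw [lintegral_congr hpt]
      have m1 : Measurable fun x => ENNReal.ofReal ((∑ k ∈ range (j+1), B k x)^2) :=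
        ((hSmeas j).pow_const 2).ennreal_ofReal
      have m2 : Measurable fun x => ENNReal.ofReal (∑ k ∈ range (j+1), B k x) :=
        (hSmeas j).ennreal_ofReal
      have m3 : Measurable fun x => ENNReal.ofReal (B (j+1) x) :=
        (hBmeas (j+1)).ennreal_ofReal
      have m4 : Measurable fun x => ENNReal.ofReal ((B (j+1) x)^2) :=
        ((hBmeas (j+1)).pow_const 2).ennreal_ofReal
      rw [lintegral_add_left m1, lintegral_add_right _ m4,
        lintegral_const_mul 2 (show Measurable fun x => ENNReal.ofReal (∑ k ∈ range (j+1), B k x) * ENNReal.ofReal (B (j+1) x) from m2.mul m3)]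
      have hind : ProbabilityTheory.IndepFun
          (fun x => ∑ k ∈ range (j+1), B k x) (B (j+1)) μ := by
        have := hBindep.indepFun_sum_range_succ hBmeas (j+1)
        have heq : (∑ k ∈ range (j+1), B k) = fun x => ∑ k ∈ range (j+1), B k x := by
          funext x; simp [Finset.sum_apply]
        rwa [heq] at this
      have hind2 : ProbabilityTheory.IndepFun
          (fun x => ENNReal.ofReal (∑ k ∈ range (j+1), B k x))
          (fun x => ENNReal.ofReal (B (j+1) x)) μ :=
        hind.comp ENNReal.measurable_ofReal ENNReal.measurable_ofReal
      rw [ProbabilityTheory.lintegral_mul_eq_lintegral_mul_lintegral_of_indepFun''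
          m2.aemeasurable m3.aemeasurable hind2,
        ih hj', hmean j hj', hBmean (j+1) hj, hB2 (j+1) hj]
      have hT : (0:ℝ) ≤ ∑ k ∈ range (j+1), 1 / q k := hTnn (j+1)
      have h2T : (0:ℝ) ≤ 2 * ((∑ k ∈ range (j+1), 1 / q k) * (1 / q (j+1))) :=
        mul_nonneg (by norm_num) (mul_nonneg hT (hqinv (j+1)))
      rw [← ENNReal.ofReal_mul hT, ← ENNReal.ofReal_ofNat 2,
        ← ENNReal.ofReal_mul (by norm_num : (0:ℝ) ≤ 2),
        ← ENNReal.ofReal_add h2T (hvq (j+1)),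
        ← ENNReal.ofReal_add (Finset.sum_nonneg fun k _ => hcnn k)
          (add_nonneg h2T (hvq (j+1)))]
      congr 1
      rw [sum_range_succ c (j+1)]
      simp only [hc]
      ring
  -- decompose over the value of κ
  have hgmeas : ∀ j : ℕ, Measurable fun x => ENNReal.ofReal ((∑ k ∈ range (j+1), B k x)^2) :=
    fun j => ((hSmeas j).pow_const 2).ennreal_ofReal
  have hsetm : ∀ j : ℕ, MeasurableSet {y | κ y = j} :=
    fun j => hκmeas (measurableSet_singleton j)
  have hpt : ∀ x, ENNReal.ofReal ((∑ k ∈ range (κ x + 1), B k x)^2)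
      = ∑ j ∈ range (K+1), Set.indicator {y | κ y = j}
          (fun y => ENNReal.ofReal ((∑ k ∈ range (j+1), B k y)^2)) x := by
    intro x
    have hmem : κ x ∈ range (K+1) := mem_range.mpr (Nat.lt_succ_of_le (hκle x))
    have h0 : ∀ j ∈ range (K+1), j ≠ κ x →
        Set.indicator {y | κ y = j}
          (fun y => ENNReal.ofReal ((∑ k ∈ range (j+1), B k y)^2)) x = 0 := by
      intro j _ hj
      apply Set.indicator_of_notMem
      intro h
      have h' : κ x = j := h
      exact hj h'.symm
    rw [Finset.sum_eq_single_of_mem (κ x) hmem h0]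
    exact (Set.indicator_of_mem (show x ∈ {y | κ y = κ x} from rfl)
      (fun y => ENNReal.ofReal ((∑ k ∈ range (κ x + 1), B k y)^2))).symm
  rw [lintegral_congr hpt,
    lintegral_finset_sum _ fun j _ => (hgmeas j).indicator (hsetm j)]
  set p : ℕ → ℝ := fun j => if j = K then γ^K else γ^j - γ^(j+1) with hp
  have hpnn : ∀ j, 0 ≤ p j := by
    intro j
    simp only [hp]
    split
    · exact pow_nonneg hγ0 K
    · exact sub_nonneg.mpr (pow_le_pow_of_le_one hγ0 hγ1.le (Nat.le_succ j))
  have hrest : ∀ j ∈ range (K+1),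
      ∫⁻ x, Set.indicator {y | κ y = j}
          (fun y => ENNReal.ofReal ((∑ k ∈ range (j+1), B k y)^2)) x ∂μ
        = ENNReal.ofReal (p j * ∑ k ∈ range (j+1), c k) := by
    intro j hjm
    have hj : j ≤ K := by simp only [mem_range] at hjm; omega
    have hφ : Measurable (({j} : Set ℕ).indicator (fun _ => (1:ℝ≥0∞))) :=
      measurable_from_top
    have hF : Measurable (fun y : ℕ → ℝ => ENNReal.ofReal ((∑ k ∈ range (j+1), y k)^2)) :=
      ((Finset.measurable_sum _ fun k _ => measurable_pi_apply k).pow_const 2).ennreal_ofReal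
    have hind : ProbabilityTheory.IndepFun
        (fun x => ({j} : Set ℕ).indicator (fun _ => (1:ℝ≥0∞)) (κ x))
        (fun x => ENNReal.ofReal ((∑ k ∈ range (j+1), B k x)^2)) μ :=
      hκindep.comp hφ hF
    have hmul : ∀ x, ({j} : Set ℕ).indicator (fun _ => (1:ℝ≥0∞)) (κ x)
        * ENNReal.ofReal ((∑ k ∈ range (j+1), B k x)^2)
        = Set.indicator {y | κ y = j}
            (fun y => ENNReal.ofReal ((∑ k ∈ range (j+1), B k y)^2)) x := by
      intro x
      by_cases h : κ x = j
      · simp [Set.indicator_apply, h]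
      · simp [Set.indicator_apply, h]
    have hmeasφκ : Measurable fun x => ({j} : Set ℕ).indicator (fun _ => (1:ℝ≥0∞)) (κ x) :=
      hφ.comp hκmeas
    rw [← lintegral_congr hmul,
      ProbabilityTheory.lintegral_mul_eq_lintegral_mul_lintegral_of_indepFun''
        hmeasφκ.aemeasurable (hgmeas j).aemeasurable hind]
    have hke : ∀ x, ({j} : Set ℕ).indicator (fun _ => (1:ℝ≥0∞)) (κ x)
        = Set.indicator {y | κ y = j} (fun _ => (1:ℝ≥0∞)) x := by
      intro x
      by_cases h : κ x = j
      · simp [Set.indicator_apply, h]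
      · simp [Set.indicator_apply, h]
    rw [lintegral_congr hke, lintegral_indicator_const (hsetm j) 1, one_mul,
      hmom j hj]
    have hμ : μ {y | κ y = j} = ENNReal.ofReal (p j) := by
      by_cases h : j = K
      · subst h; simp only [hp, if_pos rfl]; exact hκK
      · rw [hκdist j (by omega)]; simp only [hp, if_neg h]
    rw [hμ, ← ENNReal.ofReal_mul (hpnn j)]
  rw [Finset.sum_congr rfl hrest,
    ← ENNReal.ofReal_sum_of_nonneg fun j _ =>
      mul_nonneg (hpnn j) (Finset.sum_nonneg fun k _ => hcnn k)]
  congr 1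
  rw [show (∑ j ∈ range (K+1), p j * ∑ k ∈ range (j+1), c k)
      = ∑ k ∈ range (K+1), γ^k * c k from aux_sum γ K c]
  simp only [hc, mul_add]
  rw [Finset.sum_add_distrib]
  congr 1
  · refine Finset.sum_congr rfl fun k _ => ?_
    ring
  · have h1 : ∑ k ∈ range (K+1), γ^k * (2 * (1 / q k) * ∑ i ∈ range k, 1 / q i)
        = ∑ k ∈ Icc 1 K, 2 * ((γ^k / q k) * ∑ i ∈ range k, 1 / q i) := by
      rw [range_eq_Ico, Finset.sum_eq_sum_Ico_succ_bot (Nat.succ_pos K)]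
      rw [show Finset.Icc 1 K = Finset.Ico 1 (K+1) from (Finset.Ico_add_one_right_eq_Icc 1 K).symm]
      simp only [Finset.Ico_self, range_zero, sum_empty, mul_zero, zero_add, Nat.succ_eq_add_one]
      refine Finset.sum_congr rfl fun k _ => ?_
      ring
    rw [h1, ← Finset.mul_sum]
end

section
/- For m > 1, b_0 > 0, and 0 < γ < 1/m, the difference P(K₀) - P(K₀+1), where P(K) = (∑_{k=0}^K γ^k)/(∑_{k=0}^K (b_0 m^k - 1/2) γ^k), equals b_0 γ^{K₀+1} ∑_{k=0}^{K₀} γ^k (m^{K₀+1} - m^k) divided by the product {∑_{k=0}^{K₀} (b_0 m^k - 1/2) γ^k}·{∑_{k=0}^{K₀+1} (b_0 m^k - 1/2) γ^k}, and in particular P(K₀+1) < P(K₀). -/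
open Finset

theorem stmt6
    (m b0 γ : ℝ) (hm : 1 < m) (hb0 : 1 ≤ b0) (hγ0 : 0 < γ) (hγ : γ < 1 / m)
    (P : ℕ → ℝ)
    (hP : ∀ K : ℕ, P K = (∑ k ∈ Finset.range (K + 1), γ ^ k)
        / (∑ k ∈ Finset.range (K + 1), (b0 * m ^ k - 1 / 2) * γ ^ k))
    (K₀ : ℕ) :
    P K₀ - P (K₀ + 1)
      = (b0 * γ ^ (K₀ + 1) * ∑ k ∈ Finset.range (K₀ + 1), γ ^ k * (m ^ (K₀ + 1) - m ^ k))
        / ((∑ k ∈ Finset.range (K₀ + 1), (b0 * m ^ k - 1 / 2) * γ ^ k)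
            * (∑ k ∈ Finset.range (K₀ + 2), (b0 * m ^ k - 1 / 2) * γ ^ k))
    ∧ P (K₀ + 1) < P K₀ := by
  have hm0 : (0:ℝ) < m := lt_trans one_pos hm
  have hB : ∀ K : ℕ, 0 < ∑ k ∈ Finset.range (K + 1), (b0 * m ^ k - 1 / 2) * γ ^ k := by
    intro K
    apply Finset.sum_pos
    · intro k _
      have h1 : (1:ℝ) ≤ m ^ k := one_le_pow₀ (le_of_lt hm)
      have h2 : (1:ℝ) ≤ b0 * m ^ k := by nlinarith
      have : (0:ℝ) < b0 * m ^ k - 1 / 2 := by linarith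
      exact mul_pos this (pow_pos hγ0 k)
    · exact ⟨0, Finset.mem_range.mpr (Nat.succ_pos K)⟩
  set A := ∑ k ∈ Finset.range (K₀ + 1), γ ^ k with hA
  set B := ∑ k ∈ Finset.range (K₀ + 1), (b0 * m ^ k - 1 / 2) * γ ^ k with hBdef
  set B' := ∑ k ∈ Finset.range (K₀ + 2), (b0 * m ^ k - 1 / 2) * γ ^ k with hB'def
  have hBpos : 0 < B := hB K₀
  have hB'pos : 0 < B' := hB (K₀ + 1)
  have hA' : ∑ k ∈ Finset.range (K₀ + 2), γ ^ k = A + γ ^ (K₀ + 1) := by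
    rw [hA, Finset.sum_range_succ]
  have hB' : B' = B + (b0 * m ^ (K₀ + 1) - 1 / 2) * γ ^ (K₀ + 1) := by
    rw [hB'def, hBdef, Finset.sum_range_succ]
  -- key numerator identity
  have key : A * (b0 * m ^ (K₀ + 1) - 1 / 2) * γ ^ (K₀ + 1) - γ ^ (K₀ + 1) * B
      = b0 * γ ^ (K₀ + 1) * ∑ k ∈ Finset.range (K₀ + 1), γ ^ k * (m ^ (K₀ + 1) - m ^ k) := by
    rw [hA, hBdef, Finset.mul_sum, Finset.sum_mul, Finset.sum_mul, Finset.mul_sum,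
      ← Finset.sum_sub_distrib]
    apply Finset.sum_congr rfl
    intro k _
    ring
  have hdiff : P K₀ - P (K₀ + 1)
      = (b0 * γ ^ (K₀ + 1) * ∑ k ∈ Finset.range (K₀ + 1), γ ^ k * (m ^ (K₀ + 1) - m ^ k))
        / (B * B') := by
    rw [hP K₀, hP (K₀ + 1)]
    rw [div_sub_div _ _ (ne_of_gt hBpos) (ne_of_gt hB'pos)]
    congr 1
    rw [hA', ← key, hB']
    ring
  have numpos : 0 < b0 * γ ^ (K₀ + 1) * ∑ k ∈ Finset.range (K₀ + 1), γ ^ k * (m ^ (K₀ + 1) - m ^ k) := by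
    apply mul_pos (mul_pos (by linarith) (pow_pos hγ0 _))
    apply Finset.sum_pos
    · intro k hk
      have hk' : k < K₀ + 1 := Finset.mem_range.mp hk
      have : m ^ k < m ^ (K₀ + 1) := pow_lt_pow_right₀ hm hk'
      exact mul_pos (pow_pos hγ0 k) (by linarith)
    · exact ⟨0, Finset.mem_range.mpr (Nat.succ_pos K₀)⟩
  refine ⟨hdiff, ?_⟩
  have : 0 < P K₀ - P (K₀ + 1) := by
    rw [hdiff]
    exact div_pos numpos (mul_pos hBpos hB'pos)
  linarith
end

section
/- Suppose h : ℝ₊ → ℝ₊ satisfies h(yy') = h(y)h(y') whenever defined, h(m) = m^{α-z}, and h(λ) = λ^{\tilde{α}-z} for some λ with (log λ)/(log m) irrational, and suppose m^{α-z} ≤ h(y) ≤ 1 for all y ∈ (1, m) (with α ≤ z). Then \tilde{α} = α. -/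
theorem stmt15
    (m lam : ℝ) (hm : 1 < m) (hlam : 1 < lam)
    (hirr : Irrational (Real.log lam / Real.log m))
    (z : ℤ) (α α' : ℝ) (hαz : α ≤ (z : ℝ))
    (G : Set ℝ) (hG : G = {y : ℝ | ∃ i j : ℤ, y = m ^ i * lam ^ j})
    (h : ℝ → ℝ)
    (hpos : ∀ y ∈ G, 0 < h y)
    (hmul : ∀ y ∈ G, ∀ y' ∈ G, h (y * y') = h y * h y')
    (hhm : h m = m ^ (α - (z : ℝ)))
    (hhlam : h lam = lam ^ (α' - (z : ℝ)))
    (hbound : ∀ y ∈ Set.Ioo (1 : ℝ) m, m ^ (α - (z : ℝ)) ≤ h y ∧ h y ≤ 1) :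
    α' = α := by
  subst hG
  set a := α - (z : ℝ) with ha
  set b := α' - (z : ℝ) with hb
  have hm0 : (0:ℝ) < m := lt_trans one_pos hm
  have hl0 : (0:ℝ) < lam := lt_trans one_pos hlam
  have hlm : 0 < Real.log m := Real.log_pos hm
  have hll : 0 < Real.log lam := Real.log_pos hlam
  set θ := Real.log lam / Real.log m with hθ
  have hθ0 : 0 < θ := div_pos hll hlm
  have haz : a ≤ 0 := by simp [ha]; linarith
  -- memberships
  have memG : ∀ i j : ℤ, m ^ i * lam ^ j ∈ {y : ℝ | ∃ i j : ℤ, y = m ^ i * lam ^ j} :=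
    fun i j => ⟨i, j, rfl⟩
  have hmG : m ∈ {y : ℝ | ∃ i j : ℤ, y = m ^ i * lam ^ j} := ⟨1, 0, by simp⟩
  have hlG : lam ∈ {y : ℝ | ∃ i j : ℤ, y = m ^ i * lam ^ j} := ⟨0, 1, by simp⟩
  have h1G : (1:ℝ) ∈ {y : ℝ | ∃ i j : ℤ, y = m ^ i * lam ^ j} := ⟨0, 0, by simp⟩
  have hlpowG : ∀ j : ℤ, lam ^ j ∈ {y : ℝ | ∃ i j : ℤ, y = m ^ i * lam ^ j} :=
    fun j => ⟨0, j, by simp⟩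
  have hpm : 0 < h m := hpos m hmG
  have hpl : 0 < h lam := hpos lam hlG
  have h1 : h 1 = 1 := by
    have := hmul 1 h1G 1 h1G
    rw [one_mul] at this
    nlinarith [hpos 1 h1G]
  -- powers of lam
  have hlampow : ∀ j : ℤ, h (lam ^ j) = h lam ^ j := by
    intro j
    induction j using Int.induction_on with
    | zero => simpa using h1
    | succ k ih =>
      have e : lam ^ ((k:ℤ)+1) = lam ^ (k:ℤ) * lam := zpow_add_one₀ hl0.ne' _
      rw [e, hmul _ (hlpowG k) _ hlG, ih, ← zpow_add_one₀ hpl.ne']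
    | pred k ih =>
      have e : lam ^ (-(k:ℤ)) = lam ^ (-(k:ℤ)-1) * lam := by
        rw [← zpow_add_one₀ hl0.ne']; congr 1; omega
      have e2 : h lam ^ (-(k:ℤ)) = h lam ^ (-(k:ℤ)-1) * h lam := by
        rw [← zpow_add_one₀ hpl.ne']; congr 1; omega
      have := hmul _ (hlpowG (-(k:ℤ)-1)) _ hlG
      rw [← e, ih] at this
      rw [e2] at this
      exact (mul_right_cancel₀ hpl.ne' this.symm)
  -- full key
  have key : ∀ i j : ℤ, h (m ^ i * lam ^ j) = h m ^ i * h lam ^ j := by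
    intro i j
    induction i using Int.induction_on with
    | zero => simpa using hlampow j
    | succ k ih =>
      have e : m ^ ((k:ℤ)+1) * lam ^ j = m * (m ^ (k:ℤ) * lam ^ j) := by
        rw [zpow_add_one₀ hm0.ne']; ring
      rw [e, hmul _ hmG _ (memG k j), ih, zpow_add_one₀ hpm.ne']; ring
    | pred k ih =>
      have e : m ^ (-(k:ℤ)) * lam ^ j = m * (m ^ (-(k:ℤ)-1) * lam ^ j) := by
        rw [show (-(k:ℤ)) = (-(k:ℤ)-1) + 1 by ring, zpow_add_one₀ hm0.ne']; ring
      have e2 : h m ^ (-(k:ℤ)) = h m * h m ^ (-(k:ℤ)-1) := by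
        rw [show (-(k:ℤ)) = (-(k:ℤ)-1) + 1 by ring, zpow_add_one₀ hpm.ne']; ring
      have := hmul _ hmG _ (memG (-(k:ℤ)-1) j)
      rw [← e, ih, e2, mul_assoc] at this
      exact mul_left_cancel₀ hpm.ne' this.symm
  -- value of h in rpow form (logarithmic)
  have hlogval : ∀ i j : ℤ, Real.log (h (m ^ i * lam ^ j))
      = (a * i + b * ((j:ℝ) * θ)) * Real.log m := by
    intro i j
    rw [key i j, Real.log_mul (by positivity) (by positivity), Real.log_zpow, Real.log_zpow,
      hhm, hhlam, Real.log_rpow hm0, Real.log_rpow hl0]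
    have hθm : Real.log lam = θ * Real.log m := by rw [hθ, div_mul_cancel₀ _ hlm.ne']
    rw [hθm]; ring
  -- the quantitative bound
  have hkey : ∀ j : ℤ, j ≠ 0 → |(b - a) * ((j:ℝ) * θ)| ≤ -a := by
    intro j hj
    set x : ℝ := (j:ℝ) * θ with hx
    have hxirr : Irrational x := hirr.intCast_mul hj
    set t : ℝ := Int.fract x with ht
    have ht1 : t < 1 := Int.fract_lt_one x
    have ht0 : 0 < t := by
      rcases lt_or_eq_of_le (Int.fract_nonneg x) with h' | h'
      · exact h'
      · exfalso
        have : x = (⌊x⌋ : ℝ) := by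
          have := Int.self_sub_floor x
          rw [← ht] at this; linarith
        exact hxirr.ne_int ⌊x⌋ this
    set i : ℤ := -⌊x⌋ with hi
    have hifr : (i:ℝ) = t - x := by
      have := Int.self_sub_floor x
      rw [← ht] at this
      push_cast [hi]; linarith
    set y : ℝ := m ^ i * lam ^ j with hy
    have hy0 : 0 < y := by positivity
    have hylog : Real.log y = t * Real.log m := by
      rw [hy, Real.log_mul (by positivity) (by positivity), Real.log_zpow, Real.log_zpow]
      have hθm : (θ:ℝ) * Real.log m = Real.log lam := by rw [hθ, div_mul_cancel₀ _ hlm.ne']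
      have : (j:ℝ) * Real.log lam = x * Real.log m := by rw [hx, ← hθm]; ring
      rw [this, hifr]; ring
    have hy1 : 1 < y := by
      rw [← Real.log_pos_iff hy0.le, hylog]; positivity
    have hy2 : y < m := by
      rw [← Real.log_lt_log_iff hy0 hm0, hylog]
      nlinarith
    obtain ⟨hb1, hb2⟩ := hbound y ⟨hy1, hy2⟩
    have hlog1 : a * Real.log m ≤ Real.log (h y) := by
      have := Real.log_le_log (by positivity) hb1
      rwa [Real.log_rpow hm0] at this
    have hlog2 : Real.log (h y) ≤ 0 := by
      have := Real.log_le_log (hpos y (memG i j)) hb2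
      simpa using this
    rw [hy, hlogval i j, ← hx] at hlog1 hlog2
    have h1' : a ≤ a * i + b * x := (mul_le_mul_iff_of_pos_right hlm).mp hlog1
    have h2' : a * i + b * x ≤ 0 := by
      have h0 : (a * i + b * x) * Real.log m ≤ 0 * Real.log m := by linarith
      exact (mul_le_mul_iff_of_pos_right hlm).mp h0
    have hrw : a * (i:ℝ) + b * x = a * t + (b - a) * x := by rw [hifr]; ring
    rw [hrw] at h1' h2'
    have p1 : 0 ≤ (-a) * t := mul_nonneg (by linarith) ht0.le
    have p2 : 0 ≤ (-a) * (1 - t) := mul_nonneg (by linarith) (by linarith)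
    rw [abs_le]
    constructor <;> linarith
  -- conclude
  have hba : b = a := by
    by_contra hne
    have hc : 0 < |b - a| := abs_pos.mpr (sub_ne_zero.mpr hne)
    obtain ⟨n, hn⟩ := exists_nat_gt ((-a) / (|b - a| * θ))
    have hj : ((n:ℤ) + 1) ≠ 0 := by positivity
    have hbnd := hkey ((n:ℤ) + 1) hj
    have hjpos : (0:ℝ) < ((((n:ℤ)+1):ℤ):ℝ) * θ := by positivity
    rw [abs_mul, abs_of_pos hjpos] at hbnd
    have hn' : -a < (n:ℝ) * (|b - a| * θ) := by
      rw [div_lt_iff₀ (by positivity)] at hn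
      exact hn
    have : ((((n:ℤ)+1):ℤ):ℝ) = (n:ℝ) + 1 := by push_cast; ring
    rw [this] at hbnd
    nlinarith
  rw [ha, hb] at hba
  linarith
end

section
/- For a renewal process whose i.i.d. inter-arrival distribution has Laplace–Stieltjes transform structure G(s) = γF_0(s)(1 + H(ms)) with F_i(s) = (1 - e^{-(2b_0 m^i - 1)s})/((2b_0 m^i - 1)s), the function G, as an infinite sum of products of completely monotone functions bounded by 1 on ℝ₊, is completely monotone: G > 0 and (-1)^i G^{(i)}(x) > 0 for all i ∈ ℕ and x > 0. -/
open Finset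

namespace Stmt17Aux
open Set
open scoped Nat

noncomputable def Dfun (a : ℝ) (n : ℕ) : ℝ → ℝ := fun x =>
  (-1)^n * ((n ! : ℝ) / (a * x^(n+1))) *
    (1 - Real.exp (-(a*x)) * ∑ j ∈ Finset.range (n+1), (a*x)^j / (j ! : ℝ))

noncomputable def W (a : ℝ) : ℝ → ℝ := fun s => (1 - Real.exp (-(a*s))) / (a*s)



lemma hasDerivAt_sumS (a : ℝ) (n : ℕ) (x : ℝ) :
    HasDerivAt (fun y => ∑ j ∈ Finset.range (n+1), (a*y)^j / (j ! : ℝ))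
      (a * ∑ j ∈ Finset.range n, (a*x)^j / (j ! : ℝ)) x := by
  have h : ∀ j ∈ Finset.range (n+1), HasDerivAt (fun y => (a*y)^j / (j ! : ℝ))
      ((j:ℝ) * (a*x)^(j-1) * a / (j ! : ℝ)) x := by
    intro j _
    have h1 : HasDerivAt (fun y : ℝ => a * y) a x := by
      simpa using (hasDerivAt_id x).const_mul a
    exact ((hasDerivAt_pow j (a*x)).comp x h1).div_const _
  have := HasDerivAt.fun_sum h
  refine this.congr_deriv ?_
  symm
  rw [Finset.sum_range_succ']
  simp only [Nat.cast_zero, zero_mul, Nat.factorial_zero, Nat.cast_one, zero_div, add_zero]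
  rw [Finset.mul_sum]
  refine Finset.sum_congr rfl fun j _ => ?_
  have : ((j+1:ℕ) : ℝ) ≠ 0 := by positivity
  rw [Nat.factorial_succ]
  simp only [Nat.succ_sub_one]
  push_cast
  field_simp

lemma hasDerivAt_Dfun (a : ℝ) (ha : 0 < a) (n : ℕ) {x : ℝ} (hx : 0 < x) :
    HasDerivAt (Dfun a n) (Dfun a (n+1) x) x := by
  have hxne : x ≠ 0 := hx.ne'
  have hS := hasDerivAt_sumS a n x
  have hE : HasDerivAt (fun y => Real.exp (-(a*y))) (Real.exp (-(a*x)) * (-a)) x := by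
    have h1 : HasDerivAt (fun y : ℝ => -(a * y)) (-a) x := by
      simpa using ((hasDerivAt_id x).const_mul (-a))
    exact (Real.hasDerivAt_exp _).comp x h1
  have h1 : HasDerivAt (fun y => 1 - Real.exp (-(a*y)) * ∑ j ∈ Finset.range (n+1), (a*y)^j / (j ! : ℝ))
      (-(Real.exp (-(a*x)) * (-a) * (∑ j ∈ Finset.range (n+1), (a*x)^j / (j ! : ℝ))
        + Real.exp (-(a*x)) * (a * ∑ j ∈ Finset.range n, (a*x)^j / (j ! : ℝ)))) x :=
    (hE.mul hS).const_sub 1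
  have h2 : HasDerivAt (fun y : ℝ => (y^(n+1))⁻¹)
      (-((n+1:ℕ) * x^n) / (x^(n+1))^2) x := (hasDerivAt_pow (n+1) x).inv (pow_ne_zero _ hxne)
  have h3 := (h1.mul h2).const_mul ((-1:ℝ)^n * ((n ! : ℝ) / a))
  have heq : Dfun a n = fun y => ((-1:ℝ)^n * ((n ! : ℝ) / a)) *
      ((1 - Real.exp (-(a*y)) * ∑ j ∈ Finset.range (n+1), (a*y)^j / (j ! : ℝ)) * (y^(n+1))⁻¹) := by
    funext y
    simp only [Dfun]
    field_simp
  rw [heq]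
  refine h3.congr_deriv ?_
  symm
  simp only [Dfun]
  rw [Finset.sum_range_succ, Finset.sum_range_succ]
  have hane : a ≠ 0 := ha.ne'
  have hfac : ((n+1)! : ℝ) = ((n+1:ℕ):ℝ) * (n ! : ℝ) := by
    rw [Nat.factorial_succ]; push_cast; ring
  rw [hfac]
  field_simp
  ring



lemma contDiffOn_W (a : ℝ) (ha : 0 < a) : ContDiffOn ℝ ⊤ (W a) (Ioi 0) := by
  apply ContDiffOn.div
  · exact (contDiff_const.sub ((Real.contDiff_exp).comp ((contDiff_const.mul contDiff_id).neg))).contDiffOn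
  · exact (contDiff_const.mul contDiff_id).contDiffOn
  · intro x hx
    have : (0:ℝ) < a * x := mul_pos ha hx
    exact this.ne'

lemma hasDerivAt_iteratedDeriv {f : ℝ → ℝ} (hf : ContDiffOn ℝ ⊤ f (Ioi 0)) (n : ℕ) {x : ℝ}
    (hx : 0 < x) : HasDerivAt (iteratedDeriv n f) (iteratedDeriv (n+1) f x) x := by
  have ho : IsOpen (Ioi (0:ℝ)) := isOpen_Ioi
  have hmem : Ioi (0:ℝ) ∈ nhds x := ho.mem_nhds hx
  have heq : ∀ y ∈ Ioi (0:ℝ), iteratedDerivWithin n f (Ioi 0) y = iteratedDeriv n f y := by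
    intro y hy
    simp [iteratedDerivWithin, iteratedDeriv, iteratedFDerivWithin_of_isOpen n ho hy]
  have hdW : DifferentiableOn ℝ (iteratedDerivWithin n f (Ioi 0)) (Ioi 0) :=
    hf.differentiableOn_iteratedDerivWithin (by exact_mod_cast WithTop.coe_lt_top _)
      ho.uniqueDiffOn
  have hev : iteratedDerivWithin n f (Ioi 0) =ᶠ[nhds x] iteratedDeriv n f :=
    Filter.eventually_of_mem hmem heq
  have hd : DifferentiableAt ℝ (iteratedDeriv n f) x :=
    ((hdW x hx).differentiableAt hmem).congr_of_eventuallyEq hev.symm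
  have := hd.hasDerivAt
  rwa [← iteratedDeriv_succ] at this

lemma iteratedDeriv_W (a : ℝ) (ha : 0 < a) (n : ℕ) : ∀ x : ℝ, 0 < x →
    iteratedDeriv n (W a) x = Dfun a n x := by
  induction n with
  | zero =>
    intro x hx
    simp only [iteratedDeriv_zero, W, Dfun, pow_zero, Nat.factorial_zero]
    rw [Finset.sum_range_one]
    have : a * x ≠ 0 := (mul_pos ha hx).ne'
    field_simp
    simp only [Nat.factorial_zero, Nat.cast_one, zero_add, pow_one]
    ring
  | succ n ih =>
    intro x hx
    rw [iteratedDeriv_succ]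
    have hev : iteratedDeriv n (W a) =ᶠ[nhds x] Dfun a n :=
      Filter.eventually_of_mem (isOpen_Ioi.mem_nhds hx) ih
    rw [hev.deriv_eq]
    exact (hasDerivAt_Dfun a ha n hx).deriv

lemma one_sub_exp_sum_pos (u : ℝ) (hu : 0 < u) (n : ℕ) :
    0 < 1 - Real.exp (-u) * ∑ j ∈ Finset.range (n+1), u^j / (j ! : ℝ) := by
  have hS : ∑ j ∈ Finset.range (n+1), u^j / (j ! : ℝ) < Real.exp u := by
    have h1 := Real.sum_le_exp_of_nonneg hu.le (n+2)
    rw [Finset.sum_range_succ] at h1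
    have h2 : 0 < u^(n+1) / ((n+1)! : ℝ) := by positivity
    linarith
  have he : 0 < Real.exp (-u) := Real.exp_pos _
  have : Real.exp (-u) * ∑ j ∈ Finset.range (n+1), u^j / (j ! : ℝ)
      < Real.exp (-u) * Real.exp u := by
    exact (mul_lt_mul_iff_right₀ he).2 hS
  rw [← Real.exp_add, neg_add_cancel, Real.exp_zero] at this
  linarith

lemma sign_Dfun (a : ℝ) (ha : 0 < a) (n : ℕ) {x : ℝ} (hx : 0 < x) :
    (-1:ℝ)^n * Dfun a n x
      = ((n ! : ℝ) / (a * x^(n+1))) *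
        (1 - Real.exp (-(a*x)) * ∑ j ∈ Finset.range (n+1), (a*x)^j / (j ! : ℝ)) := by
  simp only [Dfun, ← mul_assoc, ← mul_pow]
  norm_num

lemma Dfun_pos (a : ℝ) (ha : 0 < a) (n : ℕ) {x : ℝ} (hx : 0 < x) :
    0 < (-1:ℝ)^n * Dfun a n x := by
  rw [sign_Dfun a ha n hx]
  have h1 : 0 < (n ! : ℝ) / (a * x^(n+1)) := by positivity
  exact mul_pos h1 (one_sub_exp_sum_pos (a*x) (mul_pos ha hx) n)

lemma Dfun_le (a : ℝ) (ha : 1 ≤ a) (n : ℕ) {x : ℝ} (hx : 0 < x) :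
    (-1:ℝ)^n * Dfun a n x ≤ (n ! : ℝ) * (max 1 x⁻¹)^(2*n) := by
  have ha0 : 0 < a := lt_of_lt_of_le one_pos ha
  rw [sign_Dfun a ha0 n hx]
  have hax : 0 < a * x := mul_pos ha0 hx
  rcases Nat.eq_zero_or_pos n with hn | hn
  · subst hn
    simp only [Nat.factorial_zero, Nat.cast_one, mul_zero, pow_zero, mul_one, pow_one]
    rw [Finset.sum_range_one]
    simp only [pow_zero, Nat.factorial_zero, Nat.cast_one, div_one]
    have h1 : 1 - Real.exp (-(a*x)) ≤ a * x := by
      have := Real.add_one_le_exp (-(a*x))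
      linarith
    have h2 : (0:ℝ) < a * x^(0+1) := by positivity
    rw [div_mul_eq_mul_div, one_mul, div_le_one h2]
    simp only [zero_add, pow_one, mul_one]
    linarith [h1]
  · -- n ≥ 1
    have hM1 : (1:ℝ) ≤ max 1 x⁻¹ := le_max_left _ _
    have hxinv : x⁻¹ ≤ max 1 x⁻¹ := le_max_right _ _
    have hstep1 : ((n ! : ℝ) / (a * x^(n+1))) *
        (1 - Real.exp (-(a*x)) * ∑ j ∈ Finset.range (n+1), (a*x)^j / (j ! : ℝ))
        ≤ (n ! : ℝ) / (a * x^(n+1)) := by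
      have hpos : 0 < (n ! : ℝ) / (a * x^(n+1)) := by positivity
      have hb : 1 - Real.exp (-(a*x)) * ∑ j ∈ Finset.range (n+1), (a*x)^j / (j ! : ℝ) ≤ 1 := by
        have : 0 ≤ Real.exp (-(a*x)) * ∑ j ∈ Finset.range (n+1), (a*x)^j / (j ! : ℝ) := by
          apply mul_nonneg (Real.exp_pos _).le
          apply Finset.sum_nonneg
          intro j _
          positivity
        linarith
      calc _ ≤ ((n ! : ℝ) / (a * x^(n+1))) * 1 := by
              exact mul_le_mul_of_nonneg_left hb hpos.le
        _ = _ := mul_one _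
    refine hstep1.trans ?_
    have h2 : (n ! : ℝ) / (a * x^(n+1)) ≤ (n ! : ℝ) * (x⁻¹)^(n+1) := by
      rw [div_le_iff₀ (by positivity)]
      have hxp : (0:ℝ) < x^(n+1) := by positivity
      have : (x⁻¹)^(n+1) * x^(n+1) = 1 := by
        rw [← mul_pow, inv_mul_cancel₀ hx.ne', one_pow]
      calc (n ! : ℝ) = (n ! : ℝ) * ((x⁻¹)^(n+1) * x^(n+1)) := by rw [this, mul_one]
        _ = (n ! : ℝ) * (x⁻¹)^(n+1) * x^(n+1) := by ring
        _ ≤ (n ! : ℝ) * (x⁻¹)^(n+1) * (a * x^(n+1)) := by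
            have h3 : x^(n+1) ≤ a * x^(n+1) := le_mul_of_one_le_left hxp.le ha
            have h4 : 0 ≤ (n ! : ℝ) * (x⁻¹)^(n+1) := by positivity
            exact mul_le_mul_of_nonneg_left h3 h4
    refine h2.trans ?_
    have h5 : (x⁻¹)^(n+1) ≤ (max 1 x⁻¹)^(n+1) :=
      pow_le_pow_left₀ (inv_nonneg.2 hx.le) hxinv _
    have h6 : (max 1 x⁻¹)^(n+1) ≤ (max 1 x⁻¹)^(2*n) := by
      apply pow_le_pow_right₀ hM1
      omega
    have h7 : (0:ℝ) ≤ (n ! : ℝ) := by positivity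
    calc (n ! : ℝ) * (x⁻¹)^(n+1) ≤ (n ! : ℝ) * (max 1 x⁻¹)^(n+1) :=
          mul_le_mul_of_nonneg_left h5 h7
      _ ≤ (n ! : ℝ) * (max 1 x⁻¹)^(2*n) := mul_le_mul_of_nonneg_left h6 h7


lemma iteratedDeriv_const_mul_on {h : ℝ → ℝ} (hh : ContDiffOn ℝ ⊤ h (Ioi 0)) (c : ℝ) :
    ∀ n, ∀ x ∈ Ioi (0:ℝ), iteratedDeriv n (fun y => c * h y) x = c * iteratedDeriv n h x := by
  intro n
  induction n with
  | zero => intro x _; simp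
  | succ n ih =>
    intro x hx
    rw [iteratedDeriv_succ]
    have hev : iteratedDeriv n (fun y => c * h y) =ᶠ[nhds x]
        (fun y => c * iteratedDeriv n h y) :=
      Filter.eventually_of_mem (isOpen_Ioi.mem_nhds hx) ih
    rw [hev.deriv_eq]
    exact (((hasDerivAt_iteratedDeriv hh n hx).const_mul c)).deriv

lemma leibniz_aux (n : ℕ) (A B : ℕ → ℝ) :
    ∑ j ∈ Finset.range (n+1), (n.choose j : ℝ) *
        (A (j+1) * B (n-j) + A j * B (n+1-j))
      = ∑ j ∈ Finset.range (n+2), ((n+1).choose j : ℝ) * (A j * B (n+1-j)) := by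
  have hS2 : ∑ j ∈ Finset.range (n+1), (n.choose j : ℝ) * (A j * B (n+1-j))
      = (∑ j ∈ Finset.range (n+1), (n.choose (j+1) : ℝ) * (A (j+1) * B (n-j)))
        + A 0 * B (n+1) := by
    rw [Finset.sum_range_succ']
    rw [Finset.sum_range_succ]
    simp [Nat.succ_sub_succ, Nat.choose_succ_self]
  have hRHS : ∑ j ∈ Finset.range (n+2), ((n+1).choose j : ℝ) * (A j * B (n+1-j))
      = (∑ j ∈ Finset.range (n+1), (((n.choose j : ℝ)) + (n.choose (j+1) : ℝ))
          * (A (j+1) * B (n-j))) + A 0 * B (n+1) := by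
    rw [Finset.sum_range_succ']
    simp only [Nat.succ_sub_succ, Nat.choose_succ_succ, Nat.cast_add,
      Nat.choose_zero_right, Nat.cast_one, one_mul, Nat.sub_zero]
  calc ∑ j ∈ Finset.range (n+1), (n.choose j : ℝ) * (A (j+1) * B (n-j) + A j * B (n+1-j))
      = (∑ j ∈ Finset.range (n+1), (n.choose j : ℝ) * (A (j+1) * B (n-j)))
        + ∑ j ∈ Finset.range (n+1), (n.choose j : ℝ) * (A j * B (n+1-j)) := by
        rw [← Finset.sum_add_distrib]
        exact Finset.sum_congr rfl fun j _ => by ring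
    _ = (∑ j ∈ Finset.range (n+1), (n.choose j : ℝ) * (A (j+1) * B (n-j)))
        + ((∑ j ∈ Finset.range (n+1), (n.choose (j+1) : ℝ) * (A (j+1) * B (n-j)))
          + A 0 * B (n+1)) := by rw [hS2]
    _ = (∑ j ∈ Finset.range (n+1), (((n.choose j : ℝ)) + (n.choose (j+1) : ℝ))
          * (A (j+1) * B (n-j))) + A 0 * B (n+1) := by
        rw [← add_assoc, ← Finset.sum_add_distrib]
        congr 1
        exact Finset.sum_congr rfl fun j _ => by ring
    _ = _ := hRHS.symm

lemma iteratedDeriv_mul_on {f g : ℝ → ℝ} (hf : ContDiffOn ℝ ⊤ f (Ioi 0))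
    (hg : ContDiffOn ℝ ⊤ g (Ioi 0)) :
    ∀ n, ∀ x ∈ Ioi (0:ℝ), iteratedDeriv n (fun y => f y * g y) x
      = ∑ j ∈ Finset.range (n+1), (n.choose j : ℝ) *
          (iteratedDeriv j f x * iteratedDeriv (n-j) g x) := by
  intro n
  induction n with
  | zero => intro x _; simp
  | succ n ih =>
    intro x hx
    rw [iteratedDeriv_succ]
    have hev : iteratedDeriv n (fun y => f y * g y) =ᶠ[nhds x]
        (fun y => ∑ j ∈ Finset.range (n+1), (n.choose j : ℝ) *
          (iteratedDeriv j f y * iteratedDeriv (n-j) g y)) :=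
      Filter.eventually_of_mem (isOpen_Ioi.mem_nhds hx) ih
    rw [hev.deriv_eq]
    have hder : HasDerivAt (fun y => ∑ j ∈ Finset.range (n+1), (n.choose j : ℝ) *
          (iteratedDeriv j f y * iteratedDeriv (n-j) g y))
        (∑ j ∈ Finset.range (n+1), (n.choose j : ℝ) *
          (iteratedDeriv (j+1) f x * iteratedDeriv (n-j) g x
            + iteratedDeriv j f x * iteratedDeriv (n-j+1) g x)) x := by
      apply HasDerivAt.fun_sum
      intro j _
      have h1 := hasDerivAt_iteratedDeriv hf j hx
      have h2 := hasDerivAt_iteratedDeriv hg (n-j) hx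
      have h3 := (h1.mul h2).const_mul ((n.choose j : ℝ))
      exact h3
    rw [hder.deriv]
    have : ∀ j ∈ Finset.range (n+1), (n.choose j : ℝ) *
          (iteratedDeriv (j+1) f x * iteratedDeriv (n-j) g x
            + iteratedDeriv j f x * iteratedDeriv (n-j+1) g x)
        = (n.choose j : ℝ) *
          (iteratedDeriv (j+1) f x * iteratedDeriv (n-j) g x
            + iteratedDeriv j f x * iteratedDeriv (n+1-j) g x) := by
      intro j hj
      have hjn : j ≤ n := Nat.lt_succ_iff.mp (Finset.mem_range.mp hj)
      rw [Nat.sub_add_comm hjn]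
    rw [Finset.sum_congr rfl this]
    exact leibniz_aux n (fun j => iteratedDeriv j f x) (fun j => iteratedDeriv j g x)


lemma W_pos_le (a : ℝ) (ha : 1 ≤ a) (n : ℕ) {x : ℝ} (hx : 0 < x) :
    0 < (-1:ℝ)^n * iteratedDeriv n (W a) x ∧
      (-1:ℝ)^n * iteratedDeriv n (W a) x ≤ (n ! : ℝ) * (max 1 x⁻¹)^(2*n) := by
  have ha0 : 0 < a := lt_of_lt_of_le one_pos ha
  rw [iteratedDeriv_W a ha0 n x hx]
  exact ⟨Dfun_pos a ha0 n hx, Dfun_le a ha n hx⟩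

lemma baseCM (γ : ℝ) (hγ0 : 0 < γ) (a : ℝ) (ha : 1 ≤ a) (n : ℕ) {x : ℝ} (hx : 0 < x) :
    0 < (-1:ℝ)^n * iteratedDeriv n (fun y => γ * W a y) x ∧
      (-1:ℝ)^n * iteratedDeriv n (fun y => γ * W a y) x ≤ γ * (n ! : ℝ) * (max 1 x⁻¹)^(2*n) := by
  have ha0 : 0 < a := lt_of_lt_of_le one_pos ha
  rw [iteratedDeriv_const_mul_on (contDiffOn_W a ha0) γ n x hx]
  obtain ⟨h1, h2⟩ := W_pos_le a ha n hx
  constructor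
  · calc (0:ℝ) < γ * ((-1:ℝ)^n * iteratedDeriv n (W a) x) := mul_pos hγ0 h1
      _ = (-1:ℝ)^n * (γ * iteratedDeriv n (W a) x) := by ring
  · calc (-1:ℝ)^n * (γ * iteratedDeriv n (W a) x)
        = γ * ((-1:ℝ)^n * iteratedDeriv n (W a) x) := by ring
      _ ≤ γ * ((n ! : ℝ) * (max 1 x⁻¹)^(2*n)) := mul_le_mul_of_nonneg_left h2 hγ0.le
      _ = γ * (n ! : ℝ) * (max 1 x⁻¹)^(2*n) := by ring

lemma stepCM {f g : ℝ → ℝ} (hf : ContDiffOn ℝ ⊤ f (Ioi 0)) (hg : ContDiffOn ℝ ⊤ g (Ioi 0))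
    (c d : ℝ) (hc : 0 ≤ c) (hd : 0 ≤ d) (k : ℕ)
    (Hf : ∀ n : ℕ, ∀ x : ℝ, 0 < x → 0 < (-1:ℝ)^n * iteratedDeriv n f x ∧
      (-1:ℝ)^n * iteratedDeriv n f x ≤ c * ((n+k).choose k : ℝ) * (n ! : ℝ) * (max 1 x⁻¹)^(2*n))
    (Hg : ∀ n : ℕ, ∀ x : ℝ, 0 < x → 0 < (-1:ℝ)^n * iteratedDeriv n g x ∧
      (-1:ℝ)^n * iteratedDeriv n g x ≤ d * (n ! : ℝ) * (max 1 x⁻¹)^(2*n))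
    (n : ℕ) {x : ℝ} (hx : 0 < x) :
    0 < (-1:ℝ)^n * iteratedDeriv n (fun y => f y * g y) x ∧
      (-1:ℝ)^n * iteratedDeriv n (fun y => f y * g y) x
        ≤ (c * d) * ((n+(k+1)).choose (k+1) : ℝ) * (n ! : ℝ) * (max 1 x⁻¹)^(2*n) := by
  have hM1 : (1:ℝ) ≤ max 1 x⁻¹ := le_max_left _ _
  have hM0 : (0:ℝ) ≤ max 1 x⁻¹ := le_trans zero_le_one hM1
  have hsum : (-1:ℝ)^n * iteratedDeriv n (fun y => f y * g y) x
      = ∑ j ∈ Finset.range (n+1), (n.choose j : ℝ) *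
          (((-1:ℝ)^j * iteratedDeriv j f x) * ((-1:ℝ)^(n-j) * iteratedDeriv (n-j) g x)) := by
    rw [iteratedDeriv_mul_on hf hg n x hx, Finset.mul_sum]
    refine Finset.sum_congr rfl fun j hj => ?_
    have hj' : j ≤ n := Nat.lt_succ_iff.mp (Finset.mem_range.mp hj)
    have hpow : ((-1:ℝ))^j * (-1:ℝ)^(n-j) = (-1:ℝ)^n := by
      rw [← pow_add]
      congr 1
      omega
    rw [← hpow]
    ring
  rw [hsum]
  constructor
  · apply Finset.sum_pos
    · intro j hj
      have hj' : j ≤ n := Nat.lt_succ_iff.mp (Finset.mem_range.mp hj)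
      have hch : 0 < (n.choose j : ℝ) := by
        exact_mod_cast Nat.choose_pos hj'
      exact mul_pos hch (mul_pos (Hf j x hx).1 (Hg (n-j) x hx).1)
    · exact Finset.nonempty_range_add_one
  · have hterm : ∀ j ∈ Finset.range (n+1), (n.choose j : ℝ) *
          (((-1:ℝ)^j * iteratedDeriv j f x) * ((-1:ℝ)^(n-j) * iteratedDeriv (n-j) g x))
        ≤ (c * d) * (n ! : ℝ) * (max 1 x⁻¹)^(2*n) * ((j+k).choose k : ℝ) := by
      intro j hj
      have hj' : j ≤ n := Nat.lt_succ_iff.mp (Finset.mem_range.mp hj)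
      have hch : (0:ℝ) ≤ (n.choose j : ℝ) := by positivity
      have h1 := (Hf j x hx)
      have h2 := (Hg (n-j) x hx)
      have hb : ((-1:ℝ)^j * iteratedDeriv j f x) * ((-1:ℝ)^(n-j) * iteratedDeriv (n-j) g x)
          ≤ (c * ((j+k).choose k : ℝ) * (j ! : ℝ) * (max 1 x⁻¹)^(2*j))
            * (d * ((n-j)! : ℝ) * (max 1 x⁻¹)^(2*(n-j))) := by
        apply mul_le_mul h1.2 h2.2 h2.1.le
        positivity
      have hfac : (n.choose j : ℝ) * ((j ! : ℝ) * ((n-j)! : ℝ)) = (n ! : ℝ) := by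
        exact_mod_cast congrArg (Nat.cast : ℕ → ℝ)
          (by rw [← Nat.choose_mul_factorial_mul_factorial hj', mul_assoc])
      have hpows : (max 1 x⁻¹)^(2*j) * (max 1 x⁻¹)^(2*(n-j)) = (max 1 x⁻¹)^(2*n) := by
        rw [← pow_add]
        congr 1
        omega
      calc (n.choose j : ℝ) *
          (((-1:ℝ)^j * iteratedDeriv j f x) * ((-1:ℝ)^(n-j) * iteratedDeriv (n-j) g x))
          ≤ (n.choose j : ℝ) * ((c * ((j+k).choose k : ℝ) * (j ! : ℝ) * (max 1 x⁻¹)^(2*j))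
            * (d * ((n-j)! : ℝ) * (max 1 x⁻¹)^(2*(n-j)))) := mul_le_mul_of_nonneg_left hb hch
        _ = (c * d) * ((j+k).choose k : ℝ) * ((n.choose j : ℝ) * ((j ! : ℝ) * ((n-j)! : ℝ)))
            * ((max 1 x⁻¹)^(2*j) * (max 1 x⁻¹)^(2*(n-j))) := by ring
        _ = (c * d) * (n ! : ℝ) * (max 1 x⁻¹)^(2*n) * ((j+k).choose k : ℝ) := by
            rw [hfac, hpows]; ring
    calc ∑ j ∈ Finset.range (n+1), (n.choose j : ℝ) *
          (((-1:ℝ)^j * iteratedDeriv j f x) * ((-1:ℝ)^(n-j) * iteratedDeriv (n-j) g x))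
        ≤ ∑ j ∈ Finset.range (n+1),
            (c * d) * (n ! : ℝ) * (max 1 x⁻¹)^(2*n) * ((j+k).choose k : ℝ) :=
          Finset.sum_le_sum hterm
      _ = (c * d) * (n ! : ℝ) * (max 1 x⁻¹)^(2*n)
            * ∑ j ∈ Finset.range (n+1), ((j+k).choose k : ℝ) := by rw [← Finset.mul_sum]
      _ = (c * d) * ((n+(k+1)).choose (k+1) : ℝ) * (n ! : ℝ) * (max 1 x⁻¹)^(2*n) := by
          have : ∑ j ∈ Finset.range (n+1), ((j+k).choose k : ℝ) = ((n+k+1).choose (k+1) : ℝ) := by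
            rw_mod_cast [Nat.sum_range_add_choose n k]
          rw [this]
          have h4 : n + (k+1) = n + k + 1 := by omega
          rw [h4]
          ring

lemma prodCM (γ : ℝ) (hγ0 : 0 < γ) (a : ℕ → ℝ) (ha : ∀ i, 1 ≤ a i) (k : ℕ) :
    ContDiffOn ℝ ⊤ (fun s => ∏ i ∈ Finset.range (k+1), γ * W (a i) s) (Ioi 0) ∧
    ∀ n : ℕ, ∀ x : ℝ, 0 < x →
      0 < (-1:ℝ)^n * iteratedDeriv n (fun s => ∏ i ∈ Finset.range (k+1), γ * W (a i) s) x ∧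
      (-1:ℝ)^n * iteratedDeriv n (fun s => ∏ i ∈ Finset.range (k+1), γ * W (a i) s) x
        ≤ γ^(k+1) * ((n+k).choose k : ℝ) * (n ! : ℝ) * (max 1 x⁻¹)^(2*n) := by
  induction k with
  | zero =>
    have hone : (fun s => ∏ i ∈ Finset.range 1, γ * W (a i) s) = fun s => γ * W (a 0) s := by
      funext s; rw [Finset.prod_range_one]
    rw [hone]
    have ha0 : 0 < a 0 := lt_of_lt_of_le one_pos (ha 0)
    refine ⟨contDiffOn_const.mul (contDiffOn_W (a 0) ha0), fun n x hx => ?_⟩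
    obtain ⟨h1, h2⟩ := baseCM γ hγ0 (a 0) (ha 0) n hx
    refine ⟨h1, h2.trans_eq ?_⟩
    simp
  | succ k ih =>
    obtain ⟨ihc, ihb⟩ := ih
    have hak : 0 < a (k+1) := lt_of_lt_of_le one_pos (ha (k+1))
    have hgc : ContDiffOn ℝ ⊤ (fun y => γ * W (a (k+1)) y) (Ioi 0) :=
      contDiffOn_const.mul (contDiffOn_W (a (k+1)) hak)
    have hprod : (fun s => ∏ i ∈ Finset.range (k+2), γ * W (a i) s)
        = fun s => (∏ i ∈ Finset.range (k+1), γ * W (a i) s) * (γ * W (a (k+1)) s) := by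
      funext s; rw [Finset.prod_range_succ]
    rw [hprod]
    refine ⟨ihc.mul hgc, fun n x hx => ?_⟩
    have := stepCM ihc hgc (γ^(k+1)) γ (by positivity) hγ0.le k ihb
      (fun n x hx => baseCM γ hγ0 (a (k+1)) (ha (k+1)) n hx) n hx
    convert this using 3
    ring


open Set
open scoped Nat



lemma summable_chgeom (n : ℕ) {r : ℝ} (h0 : 0 < r) (h1 : r < 1) :
    Summable (fun k : ℕ => ((n+k).choose k : ℝ) * r ^ (k+1)) := by
  have hs : Summable (fun j : ℕ => (j:ℝ)^n * r^j) :=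
    summable_pow_mul_geometric_of_norm_lt_one n
      (by rwa [Real.norm_eq_abs, abs_of_pos h0])
  have hs2 : Summable (fun k : ℕ => ((k+n:ℕ):ℝ)^n * r^(k+n)) := by
    have := (summable_nat_add_iff n).mpr hs
    exact this.congr (fun k => by push_cast; ring)
  have hs3 : Summable (fun k : ℕ => (((k+n:ℕ):ℝ)^n * r^(k+n)) * (r / r^n)) :=
    hs2.mul_right _
  apply Summable.of_nonneg_of_le (fun k => by positivity) (fun k => ?_) hs3
  have hch : ((n+k).choose k : ℝ) ≤ ((k+n:ℕ):ℝ)^n := by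
    have h4 : (n+k).choose k = (k+n).choose n := by
      rw [Nat.add_comm]
      exact Nat.choose_symm_add
    rw [h4]
    exact_mod_cast (Nat.choose_le_pow (k+n) n)
  have hrpow : r^(k+n) * (r / r^n) = r^(k+1) := by
    have hrn : r^n ≠ 0 := by positivity
    rw [pow_add]
    field_simp
    ring
  calc ((n+k).choose k : ℝ) * r^(k+1) ≤ ((k+n:ℕ):ℝ)^n * r^(k+1) := by
        apply mul_le_mul_of_nonneg_right hch (by positivity)
    _ = ((k+n:ℕ):ℝ)^n * r^(k+n) * (r / r^n) := by rw [mul_assoc, hrpow]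

end Stmt17Aux

open Finset Stmt17Aux Set
open scoped Nat

theorem stmt17
    (m b0 γ : ℝ) (hm : 1 < m) (hb0 : 1 ≤ b0) (hγ0 : 0 < γ) (hγ : γ < 1 / m)
    (F : ℕ → ℝ → ℝ)
    (hF : ∀ i s, F i s = (1 - Real.exp (-(2 * b0 * m ^ i - 1) * s)) / ((2 * b0 * m ^ i - 1) * s))
    (G : ℝ → ℝ)
    (hG : ∀ s, G s = ∑' k : ℕ, ∏ i ∈ Finset.range (k + 1), γ * F i s) :
    (∀ s : ℝ, 0 < s → 0 < G s) ∧
    ∀ n : ℕ, ∀ x : ℝ, 0 < x → 0 < (-1 : ℝ) ^ n * iteratedDeriv n G x := by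
  set a : ℕ → ℝ := fun i => 2 * b0 * m ^ i - 1 with ha_def
  have ha : ∀ i, 1 ≤ a i := by
    intro i
    have hmi : (1:ℝ) ≤ m ^ i := one_le_pow₀ hm.le
    simp only [ha_def]
    nlinarith
  have hγ1 : γ < 1 := by
    have h1 : 1 / m < 1 := by
      rw [div_lt_one (by linarith)]
      exact hm
    linarith
  set fk : ℕ → ℝ → ℝ := fun k s => ∏ i ∈ Finset.range (k+1), γ * W (a i) s with hfk_def
  have hFW : ∀ i s, F i s = W (a i) s := by
    intro i s
    rw [hF i s]
    simp only [W, ha_def, neg_mul]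
  have hGf : ∀ s, G s = ∑' k, fk k s := by
    intro s
    rw [hG s]
    congr 1
    funext k
    exact Finset.prod_congr rfl fun i _ => by rw [hFW i s]
  have hCM := fun k => prodCM γ hγ0 a ha k
  have hsummand : ∀ (n : ℕ) (x : ℝ), 0 < x → Summable (fun k => iteratedDeriv n (fk k) x) := by
    intro n x hx
    have hsum : Summable (fun k : ℕ => (((n+k).choose k : ℝ) * γ^(k+1))
        * ((n ! : ℝ) * (max 1 x⁻¹)^(2*n))) :=
      (summable_chgeom n hγ0 hγ1).mul_right _
    apply Summable.of_norm_bounded hsum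
    intro k
    obtain ⟨h1, h2⟩ := (hCM k).2 n x hx
    have habs : ‖iteratedDeriv n (fk k) x‖ = (-1:ℝ)^n * iteratedDeriv n (fk k) x := by
      rw [Real.norm_eq_abs, ← abs_of_pos h1, abs_mul, abs_pow, abs_neg, abs_one, one_pow, one_mul]
    rw [habs]
    calc (-1:ℝ)^n * iteratedDeriv n (fk k) x
        ≤ γ^(k+1) * ((n+k).choose k : ℝ) * (n ! : ℝ) * (max 1 x⁻¹)^(2*n) := h2
      _ = (((n+k).choose k : ℝ) * γ^(k+1)) * ((n ! : ℝ) * (max 1 x⁻¹)^(2*n)) := by ring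
  have hmain : ∀ (n : ℕ), ∀ x : ℝ, 0 < x →
      iteratedDeriv n G x = ∑' k, iteratedDeriv n (fk k) x := by
    intro n
    induction n with
    | zero =>
      intro x hx
      simp only [iteratedDeriv_zero]
      exact hGf x
    | succ n ih =>
      intro x hx
      rw [iteratedDeriv_succ]
      have hev : iteratedDeriv n G =ᶠ[nhds x] fun y => ∑' k, iteratedDeriv n (fk k) y :=
        Filter.eventually_of_mem (isOpen_Ioi.mem_nhds hx) (fun y hy => ih y hy)
      rw [hev.deriv_eq]
      have hhalf : (0:ℝ) < x/2 := half_pos hx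
      have hxmem : x ∈ Ioi (x/2) := half_lt_self hx
      have hD : HasDerivAt (fun y => ∑' k, iteratedDeriv n (fk k) y)
          (∑' k, iteratedDeriv (n+1) (fk k) x) x := by
        apply hasDerivAt_tsum_of_isPreconnected
          (u := fun k : ℕ => ((((n+1)+k).choose k : ℝ) * γ^(k+1))
            * (((n+1)! : ℝ) * (max 1 (x/2)⁻¹)^(2*(n+1))))
          ((summable_chgeom (n+1) hγ0 hγ1).mul_right _)
          isOpen_Ioi isPreconnected_Ioi
          (fun k y hy => hasDerivAt_iteratedDeriv (hCM k).1 n (lt_trans hhalf hy))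
          (fun k y hy => ?_) hxmem (hsummand n x hx) hxmem
        have hy0 : (0:ℝ) < y := lt_trans hhalf hy
        obtain ⟨h1, h2⟩ := (hCM k).2 (n+1) y hy0
        have habs : ‖iteratedDeriv (n+1) (fk k) y‖
            = (-1:ℝ)^(n+1) * iteratedDeriv (n+1) (fk k) y := by
          rw [Real.norm_eq_abs, ← abs_of_pos h1, abs_mul, abs_pow, abs_neg, abs_one,
            one_pow, one_mul]
        rw [habs]
        have hMle : max 1 y⁻¹ ≤ max 1 (x/2)⁻¹ := by
          apply max_le (le_max_left _ _)
          exact le_trans (by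
            apply inv_anti₀ hhalf (le_of_lt hy)) (le_max_right _ _)
        have hMpow : (max 1 y⁻¹)^(2*(n+1)) ≤ (max 1 (x/2)⁻¹)^(2*(n+1)) := by
          apply pow_le_pow_left₀ (by positivity) hMle
        calc (-1:ℝ)^(n+1) * iteratedDeriv (n+1) (fk k) y
            ≤ γ^(k+1) * (((n+1)+k).choose k : ℝ) * ((n+1)! : ℝ) * (max 1 y⁻¹)^(2*(n+1)) := h2
          _ ≤ γ^(k+1) * (((n+1)+k).choose k : ℝ) * ((n+1)! : ℝ) * (max 1 (x/2)⁻¹)^(2*(n+1)) := by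
              apply mul_le_mul_of_nonneg_left hMpow (by positivity)
          _ = ((((n+1)+k).choose k : ℝ) * γ^(k+1))
              * (((n+1)! : ℝ) * (max 1 (x/2)⁻¹)^(2*(n+1))) := by ring
      rw [hD.deriv]
  have hpos : ∀ (n : ℕ), ∀ x : ℝ, 0 < x → 0 < (-1:ℝ)^n * iteratedDeriv n G x := by
    intro n x hx
    rw [hmain n x hx, ← tsum_mul_left]
    apply Summable.tsum_pos ((hsummand n x hx).mul_left _)
      (fun k => ((hCM k).2 n x hx).1.le) 0 ((hCM 0).2 n x hx).1
  refine ⟨fun s hs => ?_, hpos⟩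
  have := hpos 0 s hs
  simpa using this
end

section
/- Let v_Ω² denote Var(Ω)/E[Ω]², where Ω = ∑_{k=0}^κ B_k with q_k = 2/(2b_0 m^k − 1). Then v_Ω² = (∑_{k=0}^K δ_k)/(∑_{k=0}^K (b_0 m^k − 1/2)γ^k)² − 1, where δ_k = (b_0 m^k − 1/2)γ^k·{((m+1)/(m−1) + v_k²)(b_0 m^k − 1/2) − k − (2b_0 − 1)/(m−1)}. -/
open MeasureTheory Finset

private lemma abel_aux (γ : ℝ) (a : ℕ → ℝ) (K : ℕ) :
    ∑ j ∈ Finset.range K, (γ ^ j - γ ^ (j + 1)) * a j + γ ^ K * a K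
      = a 0 + ∑ k ∈ Finset.range K, γ ^ (k + 1) * (a (k + 1) - a k) := by
  induction K with
  | zero => simp
  | succ n ih =>
    rw [Finset.sum_range_succ, Finset.sum_range_succ (fun k => γ ^ (k + 1) * (a (k + 1) - a k))]
    linear_combination ih

private lemma sum_p_eq (γ : ℝ) (K : ℕ) (p a : ℕ → ℝ)
    (hpj : ∀ j, j < K → p j = γ ^ j - γ ^ (j + 1)) (hpK : p K = γ ^ K) :
    ∑ j ∈ Finset.range (K + 1), p j * a j
      = a 0 + ∑ k ∈ Finset.range K, γ ^ (k + 1) * (a (k + 1) - a k) := by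
  have h1 : ∑ j ∈ Finset.range K, p j * a j
      = ∑ j ∈ Finset.range K, (γ ^ j - γ ^ (j + 1)) * a j :=
    Finset.sum_congr rfl (fun j hj => by rw [hpj j (Finset.mem_range.mp hj)])
  rw [Finset.sum_range_succ, hpK, h1, abel_aux]

set_option maxHeartbeats 2000000 in
theorem stmt19
    {S : Type*} [MeasurableSpace S] (μ : Measure S) [IsProbabilityMeasure μ]
    (K : ℕ) (m b0 γ : ℝ) (hm : 1 < m) (hb0 : 1 ≤ b0) (hγ0 : 0 ≤ γ) (hγ1 : γ < 1)
    (v : ℕ → ℝ)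
    (B : ℕ → S → ℝ) (κ : S → ℕ)
    (hBmeas : ∀ k, Measurable (B k)) (hκmeas : Measurable κ)
    (hBpos : ∀ k x, 0 ≤ B k x)
    (hBint : ∀ k, Integrable (B k) μ)
    (hB2int : ∀ k, Integrable (fun x => (B k x) ^ 2) μ)
    (hBmean : ∀ k, ∫ x, B k x ∂μ = b0 * m ^ k - 1 / 2)
    (hB2 : ∀ k, ∫ x, (B k x) ^ 2 ∂μ = (1 + (v k) ^ 2) * (b0 * m ^ k - 1 / 2) ^ 2)
    (hκle : ∀ x, κ x ≤ K)
    (hκdist : ∀ k, k < K → μ {x | κ x = k} = ENNReal.ofReal (γ ^ k - γ ^ (k + 1)))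
    (hκK : μ {x | κ x = K} = ENNReal.ofReal (γ ^ K))
    (hBindep : ProbabilityTheory.iIndepFun B μ)
    (hκindep : ProbabilityTheory.IndepFun κ (fun x k => B k x) μ) :
    ((∫ x, (∑ k ∈ Finset.range (κ x + 1), B k x) ^ 2 ∂μ)
        - (∫ x, ∑ k ∈ Finset.range (κ x + 1), B k x ∂μ) ^ 2)
      / (∫ x, ∑ k ∈ Finset.range (κ x + 1), B k x ∂μ) ^ 2
    = (∑ k ∈ Finset.range (K + 1),
        (b0 * m ^ k - 1 / 2) * γ ^ k
          * (((m + 1) / (m - 1) + (v k) ^ 2) * (b0 * m ^ k - 1 / 2)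
              - (k : ℝ) - (2 * b0 - 1) / (m - 1)))
      / (∑ k ∈ Finset.range (K + 1), (b0 * m ^ k - 1 / 2) * γ ^ k) ^ 2 - 1 := by
  have hm1 : m - 1 ≠ 0 := sub_ne_zero.mpr hm.ne'
  have hMeasSet : ∀ j : ℕ, MeasurableSet {x | κ x = j} :=
    fun j => hκmeas (measurableSet_singleton j)
  -- reduction of integrals of `G (κ x) x` to sums over the value of κ
  have main : ∀ (G : ℕ → S → ℝ), (∀ j, Integrable (G j) μ) →
      (∀ j, ∃ g : (ℕ → ℝ) → ℝ, Measurable g ∧ ∀ x, G j x = g (fun k => B k x)) →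
      ∫ x, G (κ x) x ∂μ
        = ∑ j ∈ Finset.range (K + 1), (μ {x | κ x = j}).toReal * ∫ x, G j x ∂μ := by
    intro G hGint hGfac
    have hpt : ∀ x, G (κ x) x
        = ∑ j ∈ Finset.range (K + 1), Set.indicator {x | κ x = j} (G j) x := by
      intro x
      have h1 : ∀ j, Set.indicator {x | κ x = j} (G j) x = if κ x = j then G j x else 0 := by
        intro j; simp [Set.indicator_apply, Set.mem_setOf_eq]
      simp_rw [h1]
      rw [Finset.sum_ite_eq (Finset.range (K + 1)) (κ x) (fun j => G j x)]
      simp [Nat.lt_succ_iff, hκle x]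
    calc ∫ x, G (κ x) x ∂μ
        = ∫ x, ∑ j ∈ Finset.range (K + 1), Set.indicator {x | κ x = j} (G j) x ∂μ := by
          exact integral_congr_ae (Filter.Eventually.of_forall hpt)
      _ = ∑ j ∈ Finset.range (K + 1), ∫ x, Set.indicator {x | κ x = j} (G j) x ∂μ :=
          integral_finset_sum _ (fun j _ => (hGint j).indicator (hMeasSet j))
      _ = ∑ j ∈ Finset.range (K + 1), (μ {x | κ x = j}).toReal * ∫ x, G j x ∂μ := by
          refine Finset.sum_congr rfl (fun j _ => ?_)
          obtain ⟨g, hg, hGg⟩ := hGfac j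
          have hGeq : G j = fun x => g (fun k => B k x) := funext hGg
          set φ : ℕ → ℝ := fun n => if n = j then (1 : ℝ) else 0 with hφ
          have hindic : (fun x => φ (κ x)) = Set.indicator {x | κ x = j} (fun _ => (1 : ℝ)) := by
            funext x; simp [hφ, Set.indicator_apply, Set.mem_setOf_eq]
          have hind : ProbabilityTheory.IndepFun (fun x => φ (κ x)) (G j) μ := by
            have := hκindep.comp (φ := φ) (ψ := g) (measurable_from_nat : Measurable φ) hg
            rw [hGeq]
            exact this
          have h1 : Integrable (fun x => φ (κ x)) μ := by
            rw [hindic]; exact (integrable_const 1).indicator (hMeasSet j)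
          have h2 := hind.integral_mul_eq_mul_integral h1.aestronglyMeasurable (hGint j).aestronglyMeasurable
          have hleft : (fun x => Set.indicator {x | κ x = j} (G j) x)
              = fun x => φ (κ x) * G j x := by
            funext x
            simp only [Set.indicator_apply, Set.mem_setOf_eq, hφ]
            split_ifs <;> simp
          have hφint : ∫ x, φ (κ x) ∂μ = (μ {x | κ x = j}).toReal := by
            rw [hindic, integral_indicator_const (1 : ℝ) (hMeasSet j)]
            simp [Measure.real]
          calc ∫ x, Set.indicator {x | κ x = j} (G j) x ∂μ
              = ∫ x, φ (κ x) * G j x ∂μ := by rw [hleft]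
            _ = (∫ x, φ (κ x) ∂μ) * ∫ x, G j x ∂μ := h2
            _ = (μ {x | κ x = j}).toReal * ∫ x, G j x ∂μ := by rw [hφint]
  -- moments of partial sums
  have hT : ∀ j : ℕ, ∫ x, (∑ k ∈ Finset.range (j + 1), B k x) ∂μ
      = ∑ k ∈ Finset.range (j + 1), (b0 * m ^ k - 1 / 2) := by
    intro j
    rw [integral_finset_sum _ (fun k _ => hBint k)]
    exact Finset.sum_congr rfl (fun k _ => hBmean k)
  have hprodint : ∀ k l : ℕ, Integrable (fun x => B k x * B l x) μ := by
    intro k l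
    by_cases h : k = l
    · subst h
      have : (fun x => B k x * B k x) = fun x => (B k x) ^ 2 := by
        funext x; ring
      rw [this]; exact hB2int k
    · exact (hBindep.indepFun h).integrable_mul (hBint k) (hBint l)
  have hprod : ∀ k l : ℕ, ∫ x, B k x * B l x ∂μ
      = (b0 * m ^ k - 1 / 2) * (b0 * m ^ l - 1 / 2)
        + (if k = l then (v k) ^ 2 * (b0 * m ^ k - 1 / 2) ^ 2 else 0) := by
    intro k l
    by_cases h : k = l
    · subst h
      rw [if_pos rfl]
      have : (fun x => B k x * B k x) = fun x => (B k x) ^ 2 := by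
        funext x; ring
      rw [this, hB2 k]; ring
    · rw [if_neg h, add_zero]
      have h2 := (hBindep.indepFun h).integral_mul_eq_mul_integral (hBint k).aestronglyMeasurable (hBint l).aestronglyMeasurable
      calc ∫ x, B k x * B l x ∂μ = (∫ x, B k x ∂μ) * ∫ x, B l x ∂μ := h2
        _ = (b0 * m ^ k - 1 / 2) * (b0 * m ^ l - 1 / 2) := by rw [hBmean k, hBmean l]
  have hQ : ∀ j : ℕ, ∫ x, (∑ k ∈ Finset.range (j + 1), B k x) ^ 2 ∂μ
      = (∑ k ∈ Finset.range (j + 1), (b0 * m ^ k - 1 / 2)) ^ 2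
        + ∑ k ∈ Finset.range (j + 1), (v k) ^ 2 * (b0 * m ^ k - 1 / 2) ^ 2 := by
    intro j
    have hexp : (fun x => (∑ k ∈ Finset.range (j + 1), B k x) ^ 2)
        = fun x => ∑ k ∈ Finset.range (j + 1), ∑ l ∈ Finset.range (j + 1), B k x * B l x := by
      funext x; rw [sq, Finset.sum_mul_sum]
    rw [hexp, integral_finset_sum _ (fun k _ => integrable_finset_sum _ (fun l _ => hprodint k l))]
    have h1 : ∀ k ∈ Finset.range (j + 1),
        ∫ x, (∑ l ∈ Finset.range (j + 1), B k x * B l x) ∂μ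
          = (b0 * m ^ k - 1 / 2) * (∑ l ∈ Finset.range (j + 1), (b0 * m ^ l - 1 / 2))
            + (v k) ^ 2 * (b0 * m ^ k - 1 / 2) ^ 2 := by
      intro k hk
      rw [integral_finset_sum _ (fun l _ => hprodint k l)]
      simp_rw [hprod k]
      rw [Finset.sum_add_distrib, ← Finset.mul_sum,
        Finset.sum_ite_eq (Finset.range (j + 1)) k
          (fun _ => (v k) ^ 2 * (b0 * m ^ k - 1 / 2) ^ 2), if_pos hk]
    rw [Finset.sum_congr rfl h1, Finset.sum_add_distrib, ← Finset.sum_mul, sq]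
  -- integrability of partial sums and squares
  have hmem : ∀ k, MemLp (B k) 2 μ := fun k =>
    (memLp_two_iff_integrable_sq (hBmeas k).aestronglyMeasurable).2 (hB2int k)
  have hSint : ∀ j : ℕ, Integrable (fun x => ∑ k ∈ Finset.range (j + 1), B k x) μ :=
    fun j => integrable_finset_sum _ (fun k _ => hBint k)
  have hS2int : ∀ j : ℕ, Integrable (fun x => (∑ k ∈ Finset.range (j + 1), B k x) ^ 2) μ := by
    intro j
    have h := (memLp_finset_sum' (Finset.range (j + 1))
      (fun k (_ : k ∈ Finset.range (j + 1)) => hmem k)).integrable_sq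
    simpa [Finset.sum_apply] using h
  -- probabilities
  have hpK : (μ {x | κ x = K}).toReal = γ ^ K := by
    rw [hκK, ENNReal.toReal_ofReal (pow_nonneg hγ0 K)]
  have hpj : ∀ j, j < K → (μ {x | κ x = j}).toReal = γ ^ j - γ ^ (j + 1) := by
    intro j hj
    rw [hκdist j hj, ENNReal.toReal_ofReal]
    have : γ ^ (j + 1) ≤ γ ^ j := pow_le_pow_of_le_one hγ0 hγ1.le (Nat.le_succ j)
    linarith
  -- closed form for partial sums of the means
  have hT' : ∀ k : ℕ, (∑ i ∈ Finset.range k, (b0 * m ^ i - 1 / 2))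
      = b0 * ((m ^ k - 1) / (m - 1)) - k / 2 := by
    intro k
    rw [Finset.sum_sub_distrib, ← Finset.mul_sum, geom_sum_eq hm.ne' k]
    simp [Finset.sum_const, Finset.card_range]
    ring
  -- the mean of Ω
  have hEΩ : ∫ x, (∑ k ∈ Finset.range (κ x + 1), B k x) ∂μ
      = ∑ k ∈ Finset.range (K + 1), (b0 * m ^ k - 1 / 2) * γ ^ k := by
    have e1 : ∫ x, (∑ k ∈ Finset.range (κ x + 1), B k x) ∂μ
        = ∑ j ∈ Finset.range (K + 1),
            (μ {x | κ x = j}).toReal * ∫ x, (∑ k ∈ Finset.range (j + 1), B k x) ∂μ :=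
      main (fun j x => ∑ k ∈ Finset.range (j + 1), B k x) hSint
        (fun j => ⟨fun f => ∑ k ∈ Finset.range (j + 1), f k,
          Finset.measurable_sum _ (fun k _ => measurable_pi_apply k), fun x => rfl⟩)
    have e2 : ∑ j ∈ Finset.range (K + 1),
          (μ {x | κ x = j}).toReal * ∫ x, (∑ k ∈ Finset.range (j + 1), B k x) ∂μ
        = ∑ j ∈ Finset.range (K + 1),
            (μ {x | κ x = j}).toReal * ∑ k ∈ Finset.range (j + 1), (b0 * m ^ k - 1 / 2) :=
      Finset.sum_congr rfl (fun j _ => by rw [hT j])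
    have e3 : ∑ j ∈ Finset.range (K + 1),
          (μ {x | κ x = j}).toReal * ∑ k ∈ Finset.range (j + 1), (b0 * m ^ k - 1 / 2)
        = (∑ k ∈ Finset.range (0 + 1), (b0 * m ^ k - 1 / 2))
          + ∑ k ∈ Finset.range K, γ ^ (k + 1)
              * ((∑ i ∈ Finset.range (k + 1 + 1), (b0 * m ^ i - 1 / 2))
                  - ∑ i ∈ Finset.range (k + 1), (b0 * m ^ i - 1 / 2)) :=
      sum_p_eq γ K (fun j => (μ {x | κ x = j}).toReal)
        (fun j => ∑ k ∈ Finset.range (j + 1), (b0 * m ^ k - 1 / 2)) hpj hpK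
    rw [e1, e2, e3, Finset.sum_range_succ' (fun k => (b0 * m ^ k - 1 / 2) * γ ^ k) K]
    have e4 : ∀ k ∈ Finset.range K, γ ^ (k + 1)
          * ((∑ i ∈ Finset.range (k + 1 + 1), (b0 * m ^ i - 1 / 2))
              - ∑ i ∈ Finset.range (k + 1), (b0 * m ^ i - 1 / 2))
        = (b0 * m ^ (k + 1) - 1 / 2) * γ ^ (k + 1) := by
      intro k _
      rw [Finset.sum_range_succ (fun i => (b0 * m ^ i - 1 / 2)) (k + 1)]
      ring
    rw [Finset.sum_congr rfl e4]
    simp [add_comm]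
  -- the second moment of Ω
  have key : ∀ k : ℕ,
      γ ^ k * (((∑ i ∈ Finset.range (k + 1), (b0 * m ^ i - 1 / 2)) ^ 2
          + ∑ i ∈ Finset.range (k + 1), (v i) ^ 2 * (b0 * m ^ i - 1 / 2) ^ 2)
        - ((∑ i ∈ Finset.range k, (b0 * m ^ i - 1 / 2)) ^ 2
          + ∑ i ∈ Finset.range k, (v i) ^ 2 * (b0 * m ^ i - 1 / 2) ^ 2))
      = (b0 * m ^ k - 1 / 2) * γ ^ k
          * (((m + 1) / (m - 1) + (v k) ^ 2) * (b0 * m ^ k - 1 / 2)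
              - (k : ℝ) - (2 * b0 - 1) / (m - 1)) := by
    intro k
    rw [Finset.sum_range_succ, Finset.sum_range_succ
      (fun i => (v i) ^ 2 * (b0 * m ^ i - 1 / 2) ^ 2), hT' k]
    field_simp
    ring
  have hEΩ2 : ∫ x, (∑ k ∈ Finset.range (κ x + 1), B k x) ^ 2 ∂μ
      = ∑ k ∈ Finset.range (K + 1),
        (b0 * m ^ k - 1 / 2) * γ ^ k
          * (((m + 1) / (m - 1) + (v k) ^ 2) * (b0 * m ^ k - 1 / 2)
              - (k : ℝ) - (2 * b0 - 1) / (m - 1)) := by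
    have e1 : ∫ x, (∑ k ∈ Finset.range (κ x + 1), B k x) ^ 2 ∂μ
        = ∑ j ∈ Finset.range (K + 1),
            (μ {x | κ x = j}).toReal * ∫ x, (∑ k ∈ Finset.range (j + 1), B k x) ^ 2 ∂μ :=
      main (fun j x => (∑ k ∈ Finset.range (j + 1), B k x) ^ 2) hS2int
        (fun j => ⟨fun f => (∑ k ∈ Finset.range (j + 1), f k) ^ 2,
          (Finset.measurable_sum _ (fun k _ => measurable_pi_apply k)).pow_const 2,
          fun x => rfl⟩)
    have e2 : ∑ j ∈ Finset.range (K + 1),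
          (μ {x | κ x = j}).toReal * ∫ x, (∑ k ∈ Finset.range (j + 1), B k x) ^ 2 ∂μ
        = ∑ j ∈ Finset.range (K + 1),
            (μ {x | κ x = j}).toReal
              * ((∑ i ∈ Finset.range (j + 1), (b0 * m ^ i - 1 / 2)) ^ 2
                  + ∑ i ∈ Finset.range (j + 1), (v i) ^ 2 * (b0 * m ^ i - 1 / 2) ^ 2) :=
      Finset.sum_congr rfl (fun j _ => by rw [hQ j])
    have e3 : ∑ j ∈ Finset.range (K + 1),
          (μ {x | κ x = j}).toReal
            * ((∑ i ∈ Finset.range (j + 1), (b0 * m ^ i - 1 / 2)) ^ 2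
                + ∑ i ∈ Finset.range (j + 1), (v i) ^ 2 * (b0 * m ^ i - 1 / 2) ^ 2)
        = ((∑ i ∈ Finset.range (0 + 1), (b0 * m ^ i - 1 / 2)) ^ 2
            + ∑ i ∈ Finset.range (0 + 1), (v i) ^ 2 * (b0 * m ^ i - 1 / 2) ^ 2)
          + ∑ k ∈ Finset.range K, γ ^ (k + 1)
              * (((∑ i ∈ Finset.range (k + 1 + 1), (b0 * m ^ i - 1 / 2)) ^ 2
                  + ∑ i ∈ Finset.range (k + 1 + 1), (v i) ^ 2 * (b0 * m ^ i - 1 / 2) ^ 2)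
                - ((∑ i ∈ Finset.range (k + 1), (b0 * m ^ i - 1 / 2)) ^ 2
                  + ∑ i ∈ Finset.range (k + 1), (v i) ^ 2 * (b0 * m ^ i - 1 / 2) ^ 2)) :=
      sum_p_eq γ K (fun j => (μ {x | κ x = j}).toReal)
        (fun j => (∑ i ∈ Finset.range (j + 1), (b0 * m ^ i - 1 / 2)) ^ 2
          + ∑ i ∈ Finset.range (j + 1), (v i) ^ 2 * (b0 * m ^ i - 1 / 2) ^ 2) hpj hpK
    rw [e1, e2, e3, Finset.sum_range_succ'
      (fun k => (b0 * m ^ k - 1 / 2) * γ ^ k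
        * (((m + 1) / (m - 1) + (v k) ^ 2) * (b0 * m ^ k - 1 / 2)
            - (k : ℝ) - (2 * b0 - 1) / (m - 1))) K]
    have e4 : ∀ k ∈ Finset.range K, γ ^ (k + 1)
          * (((∑ i ∈ Finset.range (k + 1 + 1), (b0 * m ^ i - 1 / 2)) ^ 2
              + ∑ i ∈ Finset.range (k + 1 + 1), (v i) ^ 2 * (b0 * m ^ i - 1 / 2) ^ 2)
            - ((∑ i ∈ Finset.range (k + 1), (b0 * m ^ i - 1 / 2)) ^ 2
              + ∑ i ∈ Finset.range (k + 1), (v i) ^ 2 * (b0 * m ^ i - 1 / 2) ^ 2))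
        = (b0 * m ^ (k + 1) - 1 / 2) * γ ^ (k + 1)
            * (((m + 1) / (m - 1) + (v (k + 1)) ^ 2) * (b0 * m ^ (k + 1) - 1 / 2)
                - ((k + 1 : ℕ) : ℝ) - (2 * b0 - 1) / (m - 1)) :=
      fun k _ => key (k + 1)
    have e5 : ((∑ i ∈ Finset.range (0 + 1), (b0 * m ^ i - 1 / 2)) ^ 2
          + ∑ i ∈ Finset.range (0 + 1), (v i) ^ 2 * (b0 * m ^ i - 1 / 2) ^ 2)
        = (b0 * m ^ 0 - 1 / 2) * γ ^ 0
            * (((m + 1) / (m - 1) + (v 0) ^ 2) * (b0 * m ^ 0 - 1 / 2)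
                - ((0 : ℕ) : ℝ) - (2 * b0 - 1) / (m - 1)) := by
      have := key 0
      simpa using this
    rw [Finset.sum_congr rfl e4, e5]
    exact add_comm _ _
  rw [hEΩ, hEΩ2]
  -- final algebra
  have hSpos : 0 < ∑ k ∈ Finset.range (K + 1), (b0 * m ^ k - 1 / 2) * γ ^ k := by
    apply Finset.sum_pos'
    · intro k _
      have h1 : (1 : ℝ) ≤ m ^ k := one_le_pow₀ hm.le
      have : (0 : ℝ) ≤ b0 * m ^ k - 1 / 2 := by nlinarith
      positivity
    · refine ⟨0, Finset.mem_range.mpr (Nat.succ_pos K), ?_⟩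
      simp only [pow_zero, mul_one]
      linarith
  rw [sub_div, div_self (pow_ne_zero 2 hSpos.ne')]
end
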